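/- arXiv:1006.3164 — 6 statements merged into one kernel-verified Lean document; each statement's English description precedes it below -/
import Mathlib

section
/- If g is an asymptotically locally constant function, then for any fixed reals v₁ < v₂, the convergence g(x+v)/g(x) → 1 as x → ∞ is uniform in v ∈ [v₁, v₂]. -/
open Filter Real MeasureTheory Set
open scoped Topology ENNReal

/-- Additive version: uniform convergence for h(x+v)-h(x) → 0. -/
theorem lcf_add_uniform (h : ℝ → ℝ) (hm : Measurable h)
    (hc : ∀ v : ℝ, Tendsto (fun x => h (x + v) - h x) atTop (𝓝 0)) :
    ∀ v₁ v₂ : ℝ, v₁ < v₂ → ∀ ε > 0, ∃ X : ℝ, ∀ x ≥ X,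
      ∀ v ∈ Set.Icc v₁ v₂, |h (x + v) - h x| < ε := by
  intro v₁ v₂ hv ε hε
  by_contra hcon
  push_neg at hcon
  have hcon' : ∀ n : ℕ, ∃ x ≥ (n : ℝ), ∃ v ∈ Set.Icc v₁ v₂, ε ≤ |h (x + v) - h x| := by
    intro n
    obtain ⟨x, hx, v, hv', hval⟩ := hcon (n : ℝ)
    exact ⟨x, hx, v, hv', hval⟩
  choose x hx t ht hT using hcon'
  set L : ℝ := v₂ - v₁ with hL
  have hL0 : 0 < L := by simp [hL]; linarith
  -- sets
  set A : ℕ → Set ℝ := fun n =>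
    {s | ε / 2 ≤ |h (x n + s) - h (x n)|} ∩ Icc v₁ (v₂ + L) with hA
  set B : ℕ → Set ℝ := fun n =>
    {u | ε / 2 ≤ |h (x n + t n + u) - h (x n + t n)|} ∩ Icc 0 L with hB
  have hxn : Tendsto x atTop atTop :=
    tendsto_atTop_mono hx tendsto_natCast_atTop_atTop
  have hyn : Tendsto (fun n => x n + t n) atTop atTop := by
    apply tendsto_atTop_mono (fun n => ?_) (tendsto_atTop_add_const_right _ v₁ hxn)
    exact by linarith [(ht n).1]
  have Ameas : ∀ n, MeasurableSet (A n) := by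
    intro n
    refine MeasurableSet.inter ?_ measurableSet_Icc
    exact measurableSet_le measurable_const
      ((hm.comp (measurable_const.add measurable_id)).sub measurable_const).abs
  have Bmeas : ∀ n, MeasurableSet (B n) := by
    intro n
    refine MeasurableSet.inter ?_ measurableSet_Icc
    exact measurableSet_le measurable_const
      ((hm.comp (measurable_const.add measurable_id)).sub measurable_const).abs
  -- pointwise: eventually s ∉ A n
  have hAlim : ∀ s : ℝ, ∀ᶠ n in atTop, s ∈ A n ↔ s ∈ (∅ : Set ℝ) := by
    intro s
    have : Tendsto (fun n => h (x n + s) - h (x n)) atTop (𝓝 0) := (hc s).comp hxn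
    have := (this.eventually (eventually_abs_sub_lt 0 (by linarith : (0:ℝ) < ε/2)))
    filter_upwards [this] with n hn
    simp only [sub_zero] at hn
    simp only [hA, Set.mem_inter_iff, Set.mem_setOf_eq, Set.mem_empty_iff_false, iff_false]
    intro hmem
    exact absurd hmem.1 (not_le.mpr hn)
  have hBlim : ∀ u : ℝ, ∀ᶠ n in atTop, u ∈ B n ↔ u ∈ (∅ : Set ℝ) := by
    intro u
    have : Tendsto (fun n => h (x n + t n + u) - h (x n + t n)) atTop (𝓝 0) := (hc u).comp hyn
    have := (this.eventually (eventually_abs_sub_lt 0 (by linarith : (0:ℝ) < ε/2)))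
    filter_upwards [this] with n hn
    simp only [sub_zero] at hn
    simp only [hB, Set.mem_inter_iff, Set.mem_setOf_eq, Set.mem_empty_iff_false, iff_false]
    intro hmem
    exact absurd hmem.1 (not_le.mpr hn)
  have hAtend : Tendsto (fun n => volume (A n)) atTop (𝓝 0) := by
    have := tendsto_measure_of_tendsto_indicator (atTop : Filter ℕ) (μ := volume) Ameas
      (measurableSet_Icc (a := v₁) (b := v₂ + L))
      (by simp [Real.volume_Icc]) (Eventually.of_forall fun n => Set.inter_subset_right) hAlim
    simpa using this
  have hBtend : Tendsto (fun n => volume (B n)) atTop (𝓝 0) := by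
    have := tendsto_measure_of_tendsto_indicator (atTop : Filter ℕ) (μ := volume) Bmeas
      (measurableSet_Icc (a := (0:ℝ)) (b := L))
      (by simp [Real.volume_Icc]) (Eventually.of_forall fun n => Set.inter_subset_right) hBlim
    simpa using this
  -- lower bound : volume (A n) + volume (B n) ≥ L
  have hlow : ∀ n, ENNReal.ofReal L ≤ volume (A n) + volume (B n) := by
    intro n
    have hsub : Icc (t n) (t n + L) ⊆ A n ∪ ((fun s => -t n + s) ⁻¹' B n) := by
      intro s hs
      rcases le_or_gt (ε/2) (|h (x n + s) - h (x n)|) with hcase | hcase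
      · left
        refine ⟨hcase, ?_⟩
        constructor
        · linarith [hs.1, (ht n).1]
        · linarith [hs.2, (ht n).2]
      · right
        simp only [Set.mem_preimage, hB, Set.mem_inter_iff, Set.mem_setOf_eq]
        constructor
        · have key : ε ≤ |h (x n + t n) - h (x n)| := hT n
          have htri : |h (x n + t n) - h (x n)| ≤
              |h (x n + t n) - h (x n + s)| + |h (x n + s) - h (x n)| := abs_sub_le _ _ _
          have : ε / 2 ≤ |h (x n + t n) - h (x n + s)| := by linarith
          have heq : x n + t n + (-t n + s) = x n + s := by ring
          rw [heq]
          calc ε/2 ≤ |h (x n + t n) - h (x n + s)| := this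
            _ = |h (x n + s) - h (x n + t n)| := abs_sub_comm _ _
        · constructor
          · linarith [hs.1]
          · linarith [hs.2]
    have := measure_mono (μ := volume) hsub
    have hle := le_trans this (measure_union_le _ _)
    have hpre : volume ((fun s => -t n + s) ⁻¹' B n) = volume (B n) :=
      measure_preimage_add volume (-t n) (B n)
    rw [hpre] at hle
    calc ENNReal.ofReal L = volume (Icc (t n) (t n + L)) := by
          rw [Real.volume_Icc]; ring_nf
      _ ≤ _ := hle
  -- contradiction
  have hsum : Tendsto (fun n => volume (A n) + volume (B n)) atTop (𝓝 0) := by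
    simpa using hAtend.add hBtend
  have hLpos : (0 : ℝ≥0∞) < ENNReal.ofReal L := by simp [hL0]
  have := hsum.eventually_lt_const hLpos
  obtain ⟨n, hn⟩ := this.exists
  exact absurd (hlow n) (not_le.mpr hn)

/-- Uniform convergence theorem for asymptotically locally constant functions. -/
theorem lcf_uniform_convergence (g : ℝ → ℝ)
    (hg_pos : ∀ x, 0 < g x) (hg_meas : Measurable g)
    (hg_lcf : ∀ v : ℝ, Tendsto (fun x => g (x + v) / g x) atTop (𝓝 1)) :
    ∀ v₁ v₂ : ℝ, v₁ < v₂ → ∀ ε > 0, ∃ X : ℝ, ∀ x ≥ X,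
      ∀ v ∈ Set.Icc v₁ v₂, |g (x + v) / g x - 1| < ε := by
  intro v₁ v₂ hv ε hε
  set h : ℝ → ℝ := fun x => Real.log (g x) with hh
  have hm : Measurable h := Real.measurable_log.comp hg_meas
  have hc : ∀ v : ℝ, Tendsto (fun x => h (x + v) - h x) atTop (𝓝 0) := by
    intro v
    have := (Real.continuousAt_log (by norm_num : (1:ℝ) ≠ 0)).tendsto.comp (hg_lcf v)
    simp only [Real.log_one] at this
    have heq : (fun x => Real.log (g (x + v) / g x)) = fun x => h (x + v) - h x := by
      funext x
      exact Real.log_div (hg_pos _).ne' (hg_pos _).ne'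
    rwa [Function.comp_def, heq] at this
  -- choose δ from continuity of exp at 0
  have hexp : Tendsto (fun d : ℝ => |Real.exp d - 1|) (𝓝 0) (𝓝 0) := by
    have : Tendsto (fun d : ℝ => Real.exp d - 1) (𝓝 0) (𝓝 (Real.exp 0 - 1)) :=
      (Real.continuous_exp.tendsto 0).sub tendsto_const_nhds
    simp only [Real.exp_zero, sub_self] at this
    simpa using this.abs
  obtain ⟨δ, hδ0, hδ⟩ := Metric.tendsto_nhds_nhds.mp hexp ε hε
  obtain ⟨X, hX⟩ := lcf_add_uniform h hm hc v₁ v₂ hv δ hδ0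
  refine ⟨X, fun x hx v hvmem => ?_⟩
  have hd := hX x hx v hvmem
  have hratio : g (x + v) / g x = Real.exp (h (x + v) - h x) := by
    rw [Real.exp_sub, Real.exp_log (hg_pos _), Real.exp_log (hg_pos _)]
  rw [hratio]
  have := hδ (x := h (x + v) - h x) (by simpa [Real.dist_eq] using hd)
  simpa [Real.dist_eq, abs_abs] using this
end

section
/- A positive measurable function g is an l.c.f. if and only if it admits a representation g(x) = c(x) · exp(∫₁^{e^x} ε(t)/t dt) for x ≥ 1, where c(t) > 0 is measurable with c(t) → c ∈ (0,∞) and ε(t) is measurable with ε(t) → 0 as t → ∞. -/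
open Filter Real MeasureTheory Set
open scoped Topology ENNReal

lemma uct (f : ℝ → ℝ) (hf : Measurable f)
    (h : ∀ v : ℝ, Tendsto (fun x => f (x + v) - f x) atTop (𝓝 0)) {ε : ℝ} (hε : 0 < ε) :
    ∀ᶠ x in atTop, ∀ s ∈ Set.Icc (0:ℝ) 1, |f (x + s) - f x| < ε := by
  by_contra hc
  rw [Filter.not_eventually] at hc
  have hc' : ∀ b : ℝ, ∃ x, b ≤ x ∧ ∃ s ∈ Set.Icc (0:ℝ) 1, ε ≤ |f (x + s) - f x| := by
    intro b
    obtain ⟨x, hxb, hx⟩ := (frequently_atTop.mp hc) b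
    push_neg at hx
    obtain ⟨s, hs, hsε⟩ := hx
    exact ⟨x, hxb, s, hs, hsε⟩
  choose x hxb s hs hbig using fun n : ℕ => hc' n
  have hxtop : Tendsto x atTop atTop :=
    tendsto_atTop_mono hxb tendsto_natCast_atTop_atTop
  -- the sets
  set E : ℕ → Set ℝ := fun n =>
    Icc (0:ℝ) 2 ∩ ⋂ m ∈ Set.Ici n, {t | |f (x m + t) - f (x m)| ≤ ε/3} with hE
  set E' : ℕ → Set ℝ := fun n =>
    Icc (0:ℝ) 2 ∩ ⋂ m ∈ Set.Ici n, {t | |f (x m + s m + t) - f (x m + s m)| ≤ ε/3} with hE'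
  have hmeas : ∀ (y : ℕ → ℝ) (n : ℕ), MeasurableSet
      (Icc (0:ℝ) 2 ∩ ⋂ m ∈ Set.Ici n, {t | |f (y m + t) - f (y m)| ≤ ε/3}) := by
    intro y n
    refine measurableSet_Icc.inter (MeasurableSet.biInter (to_countable _) fun m _ => ?_)
    have : Measurable fun t : ℝ => |f (y m + t) - f (y m)| :=
      ((hf.comp (measurable_const.add measurable_id)).sub measurable_const).abs
    exact this measurableSet_Iic
  have hmono : ∀ (y : ℕ → ℝ), Monotone (fun n => 
      Icc (0:ℝ) 2 ∩ ⋂ m ∈ Set.Ici n, {t | |f (y m + t) - f (y m)| ≤ ε/3}) := by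
    intro y n n' hnn'
    refine inter_subset_inter_right _ ?_
    exact biInter_subset_biInter_left (fun m hm => le_trans hnn' hm)
  have hunion : ∀ (y : ℕ → ℝ), Tendsto y atTop atTop → (⋃ n, 
      Icc (0:ℝ) 2 ∩ ⋂ m ∈ Set.Ici n, {t | |f (y m + t) - f (y m)| ≤ ε/3}) = Icc (0:ℝ) 2 := by
    intro y hy
    apply Subset.antisymm
    · exact iUnion_subset fun n => inter_subset_left
    · intro t ht
      have htend : Tendsto (fun m => f (y m + t) - f (y m)) atTop (𝓝 0) :=
        (h t).comp hy
      have : ∀ᶠ m in atTop, |f (y m + t) - f (y m)| ≤ ε/3 := by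
        have hev3 := Metric.tendsto_nhds.mp htend (ε/3) (by linarith)
        exact hev3.mono fun m hm => le_of_lt (by simpa [Real.dist_eq] using hm)
      obtain ⟨N, hN⟩ := this.exists_forall_of_atTop
      exact mem_iUnion.mpr ⟨N, ht, mem_biInter fun m hm => hN m hm⟩
  have hμtend : ∀ (y : ℕ → ℝ), Tendsto y atTop atTop → Tendsto (fun n => volume
      (Icc (0:ℝ) 2 ∩ ⋂ m ∈ Set.Ici n, {t | |f (y m + t) - f (y m)| ≤ ε/3})) atTop
      (𝓝 (volume (Icc (0:ℝ) 2))) := by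
    intro y hy
    have := tendsto_measure_iUnion_atTop (μ := volume) (hmono y)
    rwa [hunion y hy] at this
  have hvol2 : volume (Icc (0:ℝ) 2) = 2 := by
    rw [Real.volume_Icc]; norm_num
  have hev : ∀ᶠ n in atTop, (3/2 : ℝ≥0∞) < volume (E n) ∧ (3/2 : ℝ≥0∞) < volume (E' n) := by
    have h1 := (hμtend x hxtop).eventually_const_lt (by rw [hvol2, ENNReal.div_lt_iff (by norm_num) (by norm_num)]; norm_num : (3/2:ℝ≥0∞) < volume (Icc (0:ℝ) 2))
    have hxs : Tendsto (fun n => x n + s n) atTop atTop := by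
      apply tendsto_atTop_mono (fun n => ?_) hxtop
      have := (hs n).1; linarith
    have h2 := (hμtend _ hxs).eventually_const_lt (by rw [hvol2, ENNReal.div_lt_iff (by norm_num) (by norm_num)]; norm_num : (3/2:ℝ≥0∞) < volume (Icc (0:ℝ) 2))
    exact h1.and h2
  obtain ⟨n, hn1, hn2⟩ := hev.exists
  -- translation
  set B : Set ℝ := (fun t => t - s n) ⁻¹' E' n with hB
  have hBmeas : MeasurableSet B :=
    (hmeas _ n).preimage (measurable_id.sub measurable_const)
  have hBvol : volume B = volume (E' n) := by
    rw [hB]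
    have : (fun t : ℝ => t - s n) ⁻¹' E' n = (fun t : ℝ => t + (- s n)) ⁻¹' E' n := by
      simp [sub_eq_add_neg]
    rw [this, measure_preimage_add_right]
  have hsub : E n ∪ B ⊆ Icc (0:ℝ) 3 := by
    rintro t (ht | ht)
    · have := ht.1; exact ⟨this.1, by linarith [this.2]⟩
    · have ht2 : t - s n ∈ Icc (0:ℝ) 2 := ht.1
      have := hs n
      constructor
      · linarith [ht2.1, this.1]
      · linarith [ht2.2, this.2]
  have hninter : (E n ∩ B).Nonempty := by
    by_contra hemp
    rw [not_nonempty_iff_eq_empty] at hemp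
    have hdisj : Disjoint (E n) B := disjoint_iff_inter_eq_empty.mpr hemp
    have := measure_union hdisj hBmeas (μ := volume)
    have hle : volume (E n ∪ B) ≤ volume (Icc (0:ℝ) 3) := measure_mono hsub
    rw [this, hBvol] at hle
    have hvol3 : volume (Icc (0:ℝ) 3) = 3 := by rw [Real.volume_Icc]; norm_num
    rw [hvol3] at hle
    have : (3:ℝ≥0∞) < volume (E n) + volume (E' n) := by
      calc (3:ℝ≥0∞) = 3/2 + 3/2 := by norm_num
      _ < volume (E n) + volume (E' n) := ENNReal.add_lt_add hn1 hn2
    exact absurd (lt_of_lt_of_le this hle) (lt_irrefl _)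
  obtain ⟨t, htE, htB⟩ := hninter
  have h1 : |f (x n + t) - f (x n)| ≤ ε/3 := by
    have := htE.2
    exact (Set.mem_iInter₂.mp this) n (le_refl n)
  have h2 : |f (x n + s n + (t - s n)) - f (x n + s n)| ≤ ε/3 := by
    have := htB.2
    exact (Set.mem_iInter₂.mp this) n (le_refl n)
  have h2' : |f (x n + t) - f (x n + s n)| ≤ ε/3 := by
    have : x n + s n + (t - s n) = x n + t := by ring
    rwa [this] at h2
  have : ε ≤ 2 * (ε/3) := by
    calc ε ≤ |f (x n + s n) - f (x n)| := hbig n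
    _ ≤ |f (x n + s n) - f (x n + t)| + |f (x n + t) - f (x n)| := abs_sub_le _ _ _
    _ ≤ ε/3 + ε/3 := add_le_add (by rwa [abs_sub_comm]) h1
    _ = 2 * (ε/3) := by ring
  linarith

lemma II_of_bdd {f : ℝ → ℝ} (hm : Measurable f) {C : ℝ} (hC : ∀ x ∈ Set.Icc (min a b) (max a b), |f x| ≤ C) :
    IntervalIntegrable f volume a b := by
  apply MeasureTheory.IntegrableOn.intervalIntegrable
  apply Measure.integrableOn_of_bounded (M := C) (by simp [Real.volume_Icc]) hm.aestronglyMeasurable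
  refine (ae_restrict_iff' measurableSet_uIcc).mpr (ae_of_all _ fun x hx => ?_)
  rw [Set.uIcc] at hx
  simpa [Real.norm_eq_abs] using hC x hx

lemma lcf_forward (g : ℝ → ℝ) (hg_pos : ∀ x, 0 < g x) (hg_meas : Measurable g)
    (hlcf : ∀ v : ℝ, Tendsto (fun x => g (x + v) / g x) atTop (𝓝 1)) :
    ∃ (c ε : ℝ → ℝ) (c₀ : ℝ), Measurable c ∧ Measurable ε ∧
        (∀ t, 0 < c t) ∧ 0 < c₀ ∧
        Tendsto c atTop (𝓝 c₀) ∧ Tendsto ε atTop (𝓝 0) ∧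
        ∀ x ≥ (1 : ℝ),
          g x = c x * Real.exp (∫ t in (1:ℝ)..(Real.exp x), ε t / t) := by
  set f : ℝ → ℝ := fun x => Real.log (g x) with hfdef
  have hfm : Measurable f := Real.measurable_log.comp hg_meas
  have hflim : ∀ v : ℝ, Tendsto (fun x => f (x + v) - f x) atTop (𝓝 0) := by
    intro v
    have hcont : Tendsto Real.log (𝓝 1) (𝓝 0) := by
      simpa using (Real.continuousAt_log one_ne_zero).tendsto
    have := hcont.comp (hlcf v)
    refine this.congr fun x => ?_
    simp only [Function.comp_apply]
    rw [Real.log_div (hg_pos _).ne' (hg_pos _).ne']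
  -- choose X₀
  obtain ⟨X, hX⟩ := eventually_atTop.mp (uct f hfm hflim one_pos)
  set X₀ : ℝ := max X 1 with hX₀def
  have hX₀1 : (1:ℝ) ≤ X₀ := le_max_right _ _
  have hX₀ : ∀ x ≥ X₀, ∀ s ∈ Set.Icc (0:ℝ) 1, |f (x + s) - f x| < 1 :=
    fun x hx => hX x (le_trans (le_max_left _ _) hx)
  -- chained boundedness
  have hbound : ∀ n : ℕ, ∀ x : ℝ, X₀ ≤ x → x ≤ X₀ + n → |f x - f X₀| ≤ n := by
    intro n
    induction n with
    | zero => intro x h1 h2; have : x = X₀ := le_antisymm (by simpa using h2) h1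
              simp [this]
    | succ n ih =>
      intro x h1 h2
      by_cases hc : x ≤ X₀ + n
      · exact le_trans (ih x h1 hc) (by push_cast; linarith)
      · push_neg at hc
        have hs : x - (X₀ + n) ∈ Set.Icc (0:ℝ) 1 := by
          constructor <;> [linarith; (push_cast at h2 ⊢; linarith)]
        have h3 : |f ((X₀ + n) + (x - (X₀ + n))) - f (X₀ + n)| < 1 :=
          hX₀ (X₀ + n) (le_add_of_nonneg_right (Nat.cast_nonneg n)) _ hs
        have h4 : |f (X₀ + n) - f X₀| ≤ n := ih (X₀ + n) (by linarith [Nat.cast_nonneg (α := ℝ) n]) le_rfl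
        have h5 : (X₀ + n) + (x - (X₀ + n)) = x := by ring
        rw [h5] at h3
        calc |f x - f X₀| ≤ |f x - f (X₀ + n)| + |f (X₀ + n) - f X₀| := abs_sub_le _ _ _
          _ ≤ 1 + n := add_le_add h3.le h4
          _ = ((n+1 : ℕ) : ℝ) := by push_cast; ring
  -- local integrability of f on [X₀, ∞)
  have hfint : ∀ a b : ℝ, X₀ ≤ a → X₀ ≤ b → IntervalIntegrable f volume a b := by
    intro a b ha hb
    set n : ℕ := ⌈max a b - X₀⌉₊ with hn
    apply II_of_bdd hfm (C := |f X₀| + n)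
    intro x hx
    have hx1 : X₀ ≤ x := le_trans (le_min ha hb) hx.1
    have hx2 : x ≤ X₀ + n := by
      have : max a b - X₀ ≤ n := Nat.le_ceil _
      linarith [hx.2]
    have hb := hbound n x hx1 hx2
    have habs : |f x| ≤ |f X₀| + |f x - f X₀| := by
      have h := abs_add_le (f X₀) (f x - f X₀)
      simpa using h
    linarith
  -- δ
  set δ : ℝ → ℝ := fun u => if u ≤ X₀ then 0 else f (u + 1) - f u with hδdef
  have hδm : Measurable δ :=
    Measurable.ite measurableSet_Iic measurable_const ((hfm.comp (measurable_add_const 1)).sub hfm)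
  have hδbd : ∀ u, |δ u| ≤ 1 := by
    intro u
    rw [hδdef]
    by_cases hc : u ≤ X₀
    · simp [hc]
    · push_neg at hc
      simp only [if_neg (not_le.mpr hc)]
      exact (hX₀ u hc.le 1 ⟨zero_le_one, le_rfl⟩).le
  have hδ0 : Tendsto δ atTop (𝓝 0) := by
    refine (hflim 1).congr' ?_
    filter_upwards [eventually_gt_atTop X₀] with u hu
    simp [hδdef, not_le.mpr hu]
  have hδint : ∀ a b : ℝ, IntervalIntegrable δ volume a b :=
    fun a b => II_of_bdd hδm (fun x _ => hδbd x)
  -- D and ε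
  set D : ℝ → ℝ := fun x => ∫ u in (0:ℝ)..x, δ u with hDdef
  have hDcont : Continuous D := intervalIntegral.continuous_primitive (fun a b => hδint a b) 0
  set ε : ℝ → ℝ := fun t => δ (Real.log t) with hεdef
  have hεm : Measurable ε := hδm.comp Real.measurable_log
  have hε0 : Tendsto ε atTop (𝓝 0) := hδ0.comp Real.tendsto_log_atTop
  -- change of variables
  have key : ∀ x : ℝ, 0 ≤ x → (∫ t in (1:ℝ)..(Real.exp x), ε t / t) = D x := by
    intro x hx
    have himg : Real.exp '' Set.Icc 0 x = Set.Icc 1 (Real.exp x) := by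
      ext t
      constructor
      · rintro ⟨u, hu, rfl⟩
        exact ⟨by simpa using Real.exp_le_exp.mpr hu.1, Real.exp_le_exp.mpr hu.2⟩
      · rintro ⟨h1, h2⟩
        refine ⟨Real.log t, ⟨?_, ?_⟩, Real.exp_log (by linarith)⟩
        · simpa using Real.log_le_log (by norm_num) h1
        · calc Real.log t ≤ Real.log (Real.exp x) := Real.log_le_log (by linarith) h2
            _ = x := Real.log_exp x
    have hcov := integral_image_eq_integral_abs_deriv_smul (f := Real.exp) (f' := Real.exp)
      (measurableSet_Icc : MeasurableSet (Set.Icc (0:ℝ) x))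
      (fun u _ => (Real.hasDerivAt_exp u).hasDerivWithinAt)
      (Real.exp_injective.injOn) (fun t => ε t / t)
    rw [himg] at hcov
    have hR : (∫ u in Set.Icc (0:ℝ) x, |Real.exp u| • (ε (Real.exp u) / Real.exp u)) =
        ∫ u in Set.Icc (0:ℝ) x, δ u := by
      refine setIntegral_congr_fun measurableSet_Icc fun u _ => ?_
      rw [hεdef]
      simp only [Real.log_exp, abs_of_pos (Real.exp_pos u), smul_eq_mul]
      field_simp
    rw [hR] at hcov
    calc (∫ t in (1:ℝ)..(Real.exp x), ε t / t)
        = ∫ t in Set.Ioc (1:ℝ) (Real.exp x), ε t / t :=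
          intervalIntegral.integral_of_le (by simpa using Real.exp_le_exp.mpr hx)
      _ = ∫ t in Set.Icc (1:ℝ) (Real.exp x), ε t / t :=
          (MeasureTheory.integral_Icc_eq_integral_Ioc).symm
      _ = ∫ u in Set.Icc (0:ℝ) x, δ u := hcov
      _ = ∫ u in Set.Ioc (0:ℝ) x, δ u := MeasureTheory.integral_Icc_eq_integral_Ioc
      _ = D x := (intervalIntegral.integral_of_le hx).symm
  -- c
  set c : ℝ → ℝ := fun x => g x * Real.exp (-(D x)) with hcdef
  have hcm : Measurable c := hg_meas.mul (Real.continuous_exp.comp hDcont.neg).measurable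
  have hcpos : ∀ t, 0 < c t := fun t => mul_pos (hg_pos t) (Real.exp_pos _)
  have hrep : ∀ x ≥ (1:ℝ), g x = c x * Real.exp (∫ t in (1:ℝ)..(Real.exp x), ε t / t) := by
    intro x hx
    rw [key x (by linarith)]
    show g x = g x * Real.exp (-(D x)) * Real.exp (D x)
    rw [mul_assoc, ← Real.exp_add]
    simp
  -- limit of c
  set K : ℝ := ∫ u in X₀..(X₀+1), f u with hKdef
  have hDval : ∀ x : ℝ, X₀ + 1 ≤ x → D x = (∫ u in x..(x+1), f u) - K := by
    intro x hx
    have hxX : X₀ ≤ x := by linarith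
    have h1 : D x = (∫ u in (0:ℝ)..X₀, δ u) + ∫ u in X₀..x, δ u :=
      (intervalIntegral.integral_add_adjacent_intervals (hδint 0 X₀) (hδint X₀ x)).symm
    have h2 : (∫ u in (0:ℝ)..X₀, δ u) = 0 := by
      have heq : Set.EqOn δ (fun _ => (0:ℝ)) (Set.uIcc 0 X₀) := by
        intro u hu
        rw [Set.uIcc_of_le (by linarith : (0:ℝ) ≤ X₀)] at hu
        simp [hδdef, hu.2]
      rw [intervalIntegral.integral_congr heq, intervalIntegral.integral_zero]
    have h3 : (∫ u in X₀..x, δ u) = ∫ u in X₀..x, (f (u + 1) - f u) := by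
      refine intervalIntegral.integral_congr_ae ?_
      refine Filter.Eventually.of_forall fun u hu => ?_
      rw [Set.uIoc_of_le hxX] at hu
      simp [hδdef, not_le.mpr hu.1]
    have hf1int : IntervalIntegrable (fun u => f (u + 1)) volume X₀ x := by
      have := (hfint (X₀ + 1) (x + 1) (by linarith) (by linarith)).comp_add_right 1
      simpa using this
    have h4 : (∫ u in X₀..x, (f (u + 1) - f u)) =
        (∫ u in X₀..x, f (u + 1)) - ∫ u in X₀..x, f u :=
      intervalIntegral.integral_sub hf1int (hfint X₀ x le_rfl hxX)
    have h5 : (∫ u in X₀..x, f (u + 1)) = ∫ u in (X₀+1)..(x+1), f u :=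
      intervalIntegral.integral_comp_add_right f 1
    have h6 : (∫ u in (X₀+1)..(x+1), f u) = (∫ u in (X₀+1)..x, f u) + ∫ u in x..(x+1), f u :=
      (intervalIntegral.integral_add_adjacent_intervals
        (hfint (X₀+1) x (by linarith) hxX) (hfint x (x+1) hxX (by linarith))).symm
    have h7 : (∫ u in X₀..x, f u) = K + ∫ u in (X₀+1)..x, f u := by
      rw [hKdef]
      exact (intervalIntegral.integral_add_adjacent_intervals
        (hfint X₀ (X₀+1) le_rfl (by linarith)) (hfint (X₀+1) x (by linarith) hxX)).symm
    rw [h1, h2, h3, h4, h5, h6, h7]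
    ring
  have h_toK : Tendsto (fun x => f x - D x) atTop (𝓝 K) := by
    rw [Metric.tendsto_nhds]
    intro η hη
    filter_upwards [eventually_ge_atTop (X₀ + 1), eventually_atTop.mpr ⟨X₀,
      fun x hx => hX₀ x hx⟩, (uct f hfm hflim (half_pos hη)).and (eventually_ge_atTop X₀)]
      with x hx1 _ hx3
    obtain ⟨huct, hxX⟩ := hx3
    have hDx := hDval x hx1
    have hcomp : (∫ u in x..(x+1), f u) = ∫ s in (0:ℝ)..1, f (s + x) := by
      rw [intervalIntegral.integral_comp_add_right f x]
      norm_num [add_comm]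
    have hfsint : IntervalIntegrable (fun s => f (s + x)) volume 0 1 := by
      have := (hfint x (x+1) hxX (by linarith)).comp_add_right x
      simpa using this
    have hconst : (∫ _ in (0:ℝ)..1, f x) = f x := by simp
    have hsub : f x - D x - K = ∫ s in (0:ℝ)..1, (f x - f (s + x)) := by
      rw [intervalIntegral.integral_sub intervalIntegrable_const hfsint, hconst, ← hcomp, hDx]
      ring
    rw [Real.dist_eq, hsub]
    have hbnd : ∀ s ∈ Set.uIoc (0:ℝ) 1, ‖f x - f (s + x)‖ ≤ η/2 := by
      intro s hs
      rw [Set.uIoc_of_le zero_le_one] at hs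
      have h := huct s ⟨hs.1.le, hs.2⟩
      rw [Real.norm_eq_abs, abs_sub_comm, add_comm s x]
      exact h.le
    have := intervalIntegral.norm_integral_le_of_norm_le_const hbnd
    simp only [Real.norm_eq_abs] at this
    calc |∫ s in (0:ℝ)..1, (f x - f (s + x))| ≤ η/2 * |1 - 0| := this
      _ < η := by rw [show |(1:ℝ) - 0| = 1 by norm_num]; linarith
  have hctend : Tendsto c atTop (𝓝 (Real.exp K)) := by
    have hceq : c = fun x => Real.exp (f x - D x) := by
      funext x
      show g x * Real.exp (-(D x)) = Real.exp (f x - D x)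
      rw [Real.exp_sub, Real.exp_neg,
        show Real.exp (f x) = g x from Real.exp_log (hg_pos x), div_eq_mul_inv]
    rw [hceq]
    exact (Real.continuous_exp.tendsto K).comp h_toK
  exact ⟨c, ε, Real.exp K, hcm, hεm, hcpos, Real.exp_pos K, hctend, hε0, hrep⟩

lemma lcf_backward (g : ℝ → ℝ) (hg_pos : ∀ x, 0 < g x)
    (h : ∃ (c ε : ℝ → ℝ) (c₀ : ℝ), Measurable c ∧ Measurable ε ∧
        (∀ t, 0 < c t) ∧ 0 < c₀ ∧
        Tendsto c atTop (𝓝 c₀) ∧ Tendsto ε atTop (𝓝 0) ∧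
        ∀ x ≥ (1 : ℝ),
          g x = c x * Real.exp (∫ t in (1:ℝ)..(Real.exp x), ε t / t)) :
    ∀ v : ℝ, Tendsto (fun x => g (x + v) / g x) atTop (𝓝 1) := by
  obtain ⟨c, ε, c₀, hcm, hεm, hcpos, hc₀, hctend, hεtend, hrep⟩ := h
  intro v
  set φ : ℝ → ℝ := fun t => ε t / t with hφdef
  have hφm : Measurable φ := hεm.div measurable_id
  -- eventual bound for ε
  obtain ⟨T, hT⟩ : ∃ T : ℝ, ∀ t ≥ T, |ε t| ≤ 1 := by
    have := Metric.tendsto_nhds.mp hεtend 1 one_pos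
    obtain ⟨T, hT⟩ := eventually_atTop.mp this
    exact ⟨T, fun t ht => by simpa [Real.dist_eq] using (hT t ht).le⟩
  set T₀ : ℝ := max T 1 with hT₀def
  have hT₀1 : (1:ℝ) ≤ T₀ := le_max_right _ _
  have hT₀ : ∀ t ≥ T₀, |ε t| ≤ 1 := fun t ht => hT t (le_trans (le_max_left _ _) ht)
  -- ratio of c tends to 1
  have hcr : Tendsto (fun x => c (x + v) / c x) atTop (𝓝 1) := by
    have h1 : Tendsto (fun x => c (x + v)) atTop (𝓝 c₀) :=
      hctend.comp (tendsto_atTop_add_const_right _ v tendsto_id)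
    have := h1.div hctend hc₀.ne'
    simpa [div_self hc₀.ne'] using (show Tendsto (fun x => c (x + v) / c x) atTop (𝓝 (c₀ / c₀)) from this)
  have hexp_ge : ∀ (S x : ℝ), 1 ≤ S → Real.log S ≤ x → S ≤ Real.exp x := by
    intro S x hS hx
    calc S = Real.exp (Real.log S) := (Real.exp_log (by linarith)).symm
      _ ≤ Real.exp x := Real.exp_le_exp.mpr hx
  by_cases hcase : IntegrableOn φ (Set.Ioc 1 T₀) volume
  · -- integrable case
    have hInt : ∀ b : ℝ, 1 ≤ b → IntervalIntegrable φ volume 1 b := by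
      intro b hb
      by_cases hbT : b ≤ T₀
      · rw [intervalIntegrable_iff_integrableOn_Ioc_of_le hb]
        exact hcase.mono_set (Set.Ioc_subset_Ioc_right hbT)
      · push_neg at hbT
        have h1 : IntervalIntegrable φ volume 1 T₀ := by
          rw [intervalIntegrable_iff_integrableOn_Ioc_of_le hT₀1]
          exact hcase
        have h2 : IntervalIntegrable φ volume T₀ b := by
          apply II_of_bdd hφm (C := 1)
          intro t ht
          rw [min_eq_left hbT.le, max_eq_right hbT.le] at ht
          have ht1 : (1:ℝ) ≤ t := le_trans hT₀1 ht.1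
          have := hT₀ t ht.1
          rw [hφdef]
          simp only
          rw [abs_div, abs_of_pos (by linarith : (0:ℝ) < t)]
          calc |ε t| / t ≤ 1 / t := by apply div_le_div_of_nonneg_right <;> linarith
            _ ≤ 1 := by rw [div_le_one (by linarith)]; linarith
        exact h1.trans h2
    set I : ℝ → ℝ := fun x => ∫ t in (1:ℝ)..(Real.exp x), φ t with hIdef
    have hdiff : Tendsto (fun x => I (x + v) - I x) atTop (𝓝 0) := by
      rw [Metric.tendsto_nhds]
      intro η hη
      set η' : ℝ := η / (2 * Real.exp |v|) with hη'def
      have hη' : 0 < η' := by positivity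
      obtain ⟨T₁', hT₁'⟩ := eventually_atTop.mp
        ((Metric.tendsto_nhds.mp hεtend η' hη').and (eventually_ge_atTop T₀))
      set T₁ : ℝ := max T₁' T₀ with hT₁def
      have hT₁T₀ : T₀ ≤ T₁ := le_max_right _ _
      have hT₁1 : (1:ℝ) ≤ T₁ := le_trans hT₀1 hT₁T₀
      have hT₁ : ∀ t ≥ T₁, |ε t| ≤ η' := by
        intro t ht
        have := (hT₁' t (le_trans (le_max_left _ _) ht)).1
        simpa [Real.dist_eq] using this.le
      filter_upwards [eventually_ge_atTop (Real.log T₁ + |v|)] with x hx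
      have hxl : Real.log T₁ ≤ x := by have := abs_nonneg v; linarith
      have hxvl : Real.log T₁ ≤ x + v := by have := neg_abs_le v; linarith
      have hex : T₁ ≤ Real.exp x := hexp_ge T₁ x hT₁1 hxl
      have hexv : T₁ ≤ Real.exp (x + v) := hexp_ge T₁ (x + v) hT₁1 hxvl
      have h1x : (1:ℝ) ≤ Real.exp x := le_trans hT₁1 hex
      have h1xv : (1:ℝ) ≤ Real.exp (x + v) := le_trans hT₁1 hexv
      have hseg : IntervalIntegrable φ volume (Real.exp x) (Real.exp (x + v)) :=
        (hInt _ h1x).symm.trans (hInt _ h1xv)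
      have hsplit : I (x + v) - I x = ∫ t in (Real.exp x)..(Real.exp (x + v)), φ t := by
        have := intervalIntegral.integral_add_adjacent_intervals (hInt _ h1x) hseg
        rw [hIdef]
        simp only
        linarith [this]
      set m : ℝ := min (Real.exp x) (Real.exp (x + v)) with hmdef
      have hmpos : 0 < m := lt_of_lt_of_le one_pos (le_min h1x h1xv)
      have hmT₁ : T₁ ≤ m := le_min hex hexv
      have hbnd : ∀ t ∈ Set.uIoc (Real.exp x) (Real.exp (x + v)), ‖φ t‖ ≤ η' / m := by
        intro t ht
        rw [Set.mem_uIoc] at ht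
        have htm : m ≤ t := by
          rcases ht with h | h
          · exact le_trans (min_le_left _ _) h.1.le
          · exact le_trans (min_le_right _ _) h.1.le
        have htT₁ : T₁ ≤ t := le_trans hmT₁ htm
        have htpos : 0 < t := lt_of_lt_of_le hmpos htm
        rw [hφdef, Real.norm_eq_abs]
        simp only
        rw [abs_div, abs_of_pos htpos]
        calc |ε t| / t ≤ η' / t := by gcongr; exact hT₁ t htT₁
          _ ≤ η' / m := by gcongr
      have hlen : |Real.exp (x + v) - Real.exp x| ≤ m * Real.exp |v| := by
        have hmax : max (Real.exp x) (Real.exp (x + v)) = m * Real.exp |v| := by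
          rcases le_total 0 v with hv | hv
          · rw [abs_of_nonneg hv, hmdef]
            rw [min_eq_left (Real.exp_le_exp.mpr (by linarith : x ≤ x + v)),
              max_eq_right (Real.exp_le_exp.mpr (by linarith : x ≤ x + v)), ← Real.exp_add]
          · rw [abs_of_nonpos hv, hmdef]
            rw [min_eq_right (Real.exp_le_exp.mpr (by linarith : x + v ≤ x)),
              max_eq_left (Real.exp_le_exp.mpr (by linarith : x + v ≤ x)), ← Real.exp_add]
            ring_nf
        have habs : |Real.exp (x + v) - Real.exp x| =
            max (Real.exp x) (Real.exp (x + v)) - m := by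
          rcases le_total (Real.exp x) (Real.exp (x + v)) with h | h
          · rw [abs_of_nonneg (by linarith), max_eq_right h, hmdef, min_eq_left h]
          · rw [abs_of_nonpos (by linarith), max_eq_left h, hmdef, min_eq_right h]; ring
        rw [habs, hmax]
        nlinarith [hmpos]
      have hIbnd := intervalIntegral.norm_integral_le_of_norm_le_const hbnd
      rw [Real.dist_eq, sub_zero, hsplit]
      have : η' / m * |Real.exp (x + v) - Real.exp x| ≤ η' * Real.exp |v| := by
        rw [div_mul_eq_mul_div, div_le_iff₀ hmpos]
        calc η' * |Real.exp (x + v) - Real.exp x| ≤ η' * (m * Real.exp |v|) := by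
              apply mul_le_mul_of_nonneg_left hlen hη'.le
          _ = η' * Real.exp |v| * m := by ring
      have hfin : η' * Real.exp |v| = η / 2 := by
        rw [hη'def]
        field_simp
      calc |∫ t in (Real.exp x)..(Real.exp (x + v)), φ t| ≤ η' / m * |Real.exp (x + v) - Real.exp x| := by
            simpa [Real.norm_eq_abs] using hIbnd
        _ ≤ η / 2 := by rw [← hfin]; exact this
        _ < η := by linarith
    have hprod : Tendsto (fun x => (c (x + v) / c x) * Real.exp (I (x + v) - I x))
        atTop (𝓝 1) := by
      have := hcr.mul ((Real.continuous_exp.tendsto 0).comp hdiff)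
      simpa using this
    refine hprod.congr' ?_
    filter_upwards [eventually_ge_atTop (max 1 (1 - v))] with x hx
    have hx1 : (1:ℝ) ≤ x := le_trans (le_max_left _ _) hx
    have hxv1 : (1:ℝ) ≤ x + v := by have := le_trans (le_max_right _ _) hx; linarith
    rw [hrep (x + v) hxv1, hrep x hx1, Real.exp_sub]
    have hcx := (hcpos x).ne'
    have hcxv := (hcpos (x + v)).ne'
    have hex := (Real.exp_pos (I x)).ne'
    have hexv := (Real.exp_pos (I (x + v))).ne'
    rw [hIdef]
    simp only
    field_simp
    try ring
  · -- non-integrable (junk) case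
    have hjunk : ∀ b : ℝ, T₀ ≤ b → (∫ t in (1:ℝ)..b, φ t) = 0 := by
      intro b hb
      apply intervalIntegral.integral_undef
      intro hI
      rw [intervalIntegrable_iff_integrableOn_Ioc_of_le (le_trans hT₀1 hb)] at hI
      exact hcase (hI.mono_set (Set.Ioc_subset_Ioc_right hb))
    refine hcr.congr' ?_
    filter_upwards [eventually_ge_atTop (max 1 (max (1 - v) (Real.log T₀ + |v|)))] with x hx
    have hx1 : (1:ℝ) ≤ x := le_trans (le_max_left _ _) hx
    have hxv1 : (1:ℝ) ≤ x + v := by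
      have := le_trans (le_trans (le_max_left _ _) (le_max_right _ _)) hx; linarith
    have hxl : Real.log T₀ + |v| ≤ x :=
      le_trans (le_trans (le_max_right _ _) (le_max_right _ _)) hx
    have hex : T₀ ≤ Real.exp x := hexp_ge T₀ x hT₀1 (by have := abs_nonneg v; linarith)
    have hexv : T₀ ≤ Real.exp (x + v) := hexp_ge T₀ (x + v) hT₀1 (by have := neg_abs_le v; linarith)
    rw [hrep (x + v) hxv1, hrep x hx1, hjunk _ hex, hjunk _ hexv]
    simp

/-- Integral representation theorem for asymptotically locally constant functions. -/
theorem lcf_integral_representation (g : ℝ → ℝ)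
    (hg_pos : ∀ x, 0 < g x) (hg_meas : Measurable g) :
    (∀ v : ℝ, Tendsto (fun x => g (x + v) / g x) atTop (𝓝 1)) ↔
      ∃ (c ε : ℝ → ℝ) (c₀ : ℝ), Measurable c ∧ Measurable ε ∧
        (∀ t, 0 < c t) ∧ 0 < c₀ ∧
        Tendsto c atTop (𝓝 c₀) ∧ Tendsto ε atTop (𝓝 0) ∧
        ∀ x ≥ (1 : ℝ),
          g x = c x * Real.exp (∫ t in (1:ℝ)..(Real.exp x), ε t / t) := by
  constructor
  · exact lcf_forward g hg_pos hg_meas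
  · exact lcf_backward g hg_pos
end

section
/- A positive measurable function g is an l.c.f. if and only if for every v ∈ ℝ and every function v(x) → v as x → ∞, one has g(x + v(x))/g(x) → 1 as x → ∞. -/
open Filter Real MeasureTheory
open scoped Topology

lemma lcf_seq_aux (h : ℝ → ℝ) (hmeas : Measurable h)
    (H : ∀ t : ℝ, Tendsto (fun x => h (x + t) - h x) atTop (𝓝 0))
    (v : ℝ) (u w : ℕ → ℝ) (hu : Tendsto u atTop atTop)
    (hw : Tendsto w atTop (𝓝 v)) :
    Tendsto (fun n => h (u n + w n) - h (u n)) atTop (𝓝 0) := by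
  set L : ℝ := |v| + 3 with hL
  have hvL : |v| + 1 ≤ L - 2 := by simp only [hL]; linarith
  have hL3 : (3 : ℝ) ≤ L := by
    have : (0:ℝ) ≤ |v| := abs_nonneg v
    linarith
  -- u n + w n → ∞
  have hu2 : Tendsto (fun n => u n + w n) atTop atTop := by
    refine tendsto_atTop_mono' atTop ?_ (tendsto_atTop_add_const_right atTop (v - 1) hu)
    filter_upwards [hw.eventually (eventually_ge_nhds (by linarith : v - 1 < v))] with n hn
    linarith
  -- the Egorov family
  set F : ℕ → ℝ → ℝ := fun n t =>
    |h (u n + t) - h (u n)| + |h (u n + w n + t) - h (u n + w n)| with hF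
  have hFmeas : ∀ n, StronglyMeasurable (F n) := by
    intro n
    refine Measurable.stronglyMeasurable ?_
    exact (((hmeas.comp (measurable_const_add (u n))).sub measurable_const).abs.add
      ((hmeas.comp (measurable_const_add (u n + w n))).sub measurable_const).abs)
  have hFnonneg : ∀ n t, 0 ≤ F n t := fun n t => by positivity
  have hFtendsto : ∀ t : ℝ, Tendsto (fun n => F n t) atTop (𝓝 0) := by
    intro t
    have h1 : Tendsto (fun n => h (u n + t) - h (u n)) atTop (𝓝 0) := (H t).comp hu
    have h2 : Tendsto (fun n => h (u n + w n + t) - h (u n + w n)) atTop (𝓝 0) :=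
      (H t).comp hu2
    have := (h1.abs.add h2.abs)
    simpa using this
  -- Egorov
  obtain ⟨t, hts, htm, htμ, htu⟩ :=
    MeasureTheory.tendstoUniformlyOn_of_ae_tendsto (μ := volume) (f := F) (g := 0)
      hFmeas stronglyMeasurable_const (measurableSet_Icc (a := (0:ℝ)) (b := L))
      (by rw [Real.volume_Icc]; exact ENNReal.ofReal_ne_top)
      (Filter.Eventually.of_forall fun x _ => hFtendsto x) (by norm_num : (0:ℝ) < 1/2)
  set E : Set ℝ := Set.Icc 0 L \ t with hE
  have hEm : MeasurableSet E := (measurableSet_Icc).diff htm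
  have hEvol : ENNReal.ofReal (L - 1/2) ≤ volume E := by
    have hdiff : volume E = volume (Set.Icc 0 L) - volume t :=
      measure_diff hts htm.nullMeasurableSet (ne_top_of_le_ne_top ENNReal.ofReal_ne_top htμ)
    rw [hdiff, Real.volume_Icc]
    calc ENNReal.ofReal (L - 1/2) = ENNReal.ofReal (L - 0) - ENNReal.ofReal (1/2) := by
          rw [← ENNReal.ofReal_sub _ (by norm_num)]; ring_nf
      _ ≤ ENNReal.ofReal (L - 0) - volume t := by
          exact tsub_le_tsub_left htμ _
  have hEsub : E ⊆ Set.Icc 0 L := Set.diff_subset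
  -- conclude
  rw [NormedAddCommGroup.tendsto_nhds_zero]
  intro ε hε
  have hεu : ∀ᶠ n in atTop, ∀ x ∈ E, dist ((0 : ℝ → ℝ) x) (F n x) < ε / 2 := by
    rw [Metric.tendstoUniformlyOn_iff] at htu
    exact htu (ε/2) (by linarith)
  have hwb : ∀ᶠ n in atTop, |w n| ≤ L - 2 := by
    filter_upwards [hw.eventually (Metric.ball_mem_nhds v one_pos)] with n hn
    have : |w n - v| < 1 := by simpa [Real.dist_eq] using hn
    have := abs_sub_abs_le_abs_sub (w n) v
    linarith [le_of_lt (lt_of_le_of_lt this (by linarith : |w n - v| < 1)), hvL]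
  filter_upwards [hεu, hwb] with n hn hwn
  -- find a good shift point
  have hBvol : volume ((fun x => x + w n) ⁻¹' E) = volume E :=
    measure_preimage_add_right volume (w n) E
  have hBm : MeasurableSet ((fun x => x + w n) ⁻¹' E) :=
    hEm.preimage (measurable_add_const (w n))
  have hne : (E ∩ ((fun x => x + w n) ⁻¹' E)).Nonempty := by
    rw [Set.nonempty_iff_ne_empty]
    intro hempty
    have hinter : volume (E ∩ ((fun x => x + w n) ⁻¹' E)) = 0 := by rw [hempty]; simp
    have hunion : E ∪ ((fun x => x + w n) ⁻¹' E) ⊆ Set.Icc (min 0 (-w n)) (max L (L - w n)) := by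
      intro x hx
      rcases hx with hx | hx
      · rcases hEsub hx with ⟨h1, h2⟩
        exact ⟨le_trans (min_le_left _ _) h1, le_trans h2 (le_max_left _ _)⟩
      · have h3 : x + w n ∈ Set.Icc 0 L := hEsub hx
        rw [Set.mem_Icc] at h3
        obtain ⟨h1, h2⟩ := h3
        constructor
        · have : -w n ≤ x := by linarith
          exact le_trans (min_le_right _ _) this
        · have : x ≤ L - w n := by linarith
          exact le_trans this (le_max_right _ _)
    have hlen : max L (L - w n) - min 0 (-w n) ≤ 2 * L - 2 := by
      rcases le_or_gt 0 (w n) with hpos | hneg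
      · have h1 : max L (L - w n) = L := max_eq_left (by linarith)
        have h2 : min 0 (-w n) = -w n := min_eq_right (by linarith)
        have : w n ≤ L - 2 := (abs_le.mp hwn).2
        rw [h1, h2]; linarith
      · have h1 : max L (L - w n) = L - w n := max_eq_right (by linarith)
        have h2 : min 0 (-w n) = 0 := min_eq_left (by linarith)
        have : -(L - 2) ≤ w n := (abs_le.mp hwn).1
        rw [h1, h2]; linarith
    have hμu : volume (E ∪ ((fun x => x + w n) ⁻¹' E)) ≤ ENNReal.ofReal (2 * L - 2) := by
      refine le_trans (measure_mono hunion) ?_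
      rw [Real.volume_Icc]
      exact ENNReal.ofReal_le_ofReal hlen
    have hsum : volume E + volume ((fun x => x + w n) ⁻¹' E)
        = volume (E ∪ ((fun x => x + w n) ⁻¹' E)) := by
      have := measure_union_add_inter (μ := volume) E hBm
      rw [hinter, add_zero] at this
      exact this.symm
    have hlow : ENNReal.ofReal (2 * L - 1) ≤ ENNReal.ofReal (2 * L - 2) := by
      calc ENNReal.ofReal (2 * L - 1) = ENNReal.ofReal (L - 1/2) + ENNReal.ofReal (L - 1/2) := by
            rw [← ENNReal.ofReal_add (by linarith) (by linarith)]; ring_nf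
        _ ≤ volume E + volume ((fun x => x + w n) ⁻¹' E) := by
            rw [hBvol]; exact add_le_add hEvol hEvol
        _ = volume (E ∪ ((fun x => x + w n) ⁻¹' E)) := hsum
        _ ≤ ENNReal.ofReal (2 * L - 2) := hμu
    rw [ENNReal.ofReal_le_ofReal_iff (by linarith)] at hlow
    linarith
  obtain ⟨s, hsE, hsB⟩ := hne
  have h1 := hn (s + w n) hsB
  have h2 := hn s hsE
  rw [dist_comm, Pi.zero_apply, dist_zero_right, Real.norm_eq_abs,
    abs_of_nonneg (hFnonneg _ _)] at h1 h2
  have e1 : |h (u n + (s + w n)) - h (u n)| < ε / 2 :=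
    lt_of_le_of_lt (le_add_of_nonneg_right (abs_nonneg _)) h1
  have e2 : |h (u n + w n + s) - h (u n + w n)| < ε / 2 :=
    lt_of_le_of_lt (le_add_of_nonneg_left (abs_nonneg _)) h2
  have key : h (u n + w n) - h (u n)
      = (h (u n + (s + w n)) - h (u n)) - (h (u n + w n + s) - h (u n + w n)) := by
    have : u n + (s + w n) = u n + w n + s := by ring
    rw [this]; ring
  rw [Real.norm_eq_abs, key]
  calc |_ - _| ≤ |h (u n + (s + w n)) - h (u n)| + |h (u n + w n + s) - h (u n + w n)| :=
        abs_sub _ _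
    _ < ε / 2 + ε / 2 := add_lt_add e1 e2
    _ = ε := by ring

/-- `g` is an l.c.f. iff `g (x + v x) / g x → 1` for every function `v x → v`. -/
theorem lcf_iff_moving_shift (g : ℝ → ℝ)
    (hg_pos : ∀ x, 0 < g x) (hg_meas : Measurable g) :
    (∀ v : ℝ, Tendsto (fun x => g (x + v) / g x) atTop (𝓝 1)) ↔
      (∀ (v : ℝ) (vf : ℝ → ℝ), Tendsto vf atTop (𝓝 v) →
        Tendsto (fun x => g (x + vf x) / g x) atTop (𝓝 1)) := by
  constructor
  · intro H v vf hvf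
    set h : ℝ → ℝ := fun x => Real.log (g x) with hh
    have hmeas : Measurable h := Real.measurable_log.comp hg_meas
    have Hh : ∀ t : ℝ, Tendsto (fun x => h (x + t) - h x) atTop (𝓝 0) := by
      intro t
      have : Tendsto (fun x => Real.log (g (x + t) / g x)) atTop (𝓝 (Real.log 1)) :=
        ((Real.continuousAt_log one_ne_zero).tendsto).comp (H t)
      rw [Real.log_one] at this
      refine this.congr fun x => ?_
      rw [Real.log_div (hg_pos _).ne' (hg_pos _).ne']
    have key : Tendsto (fun x => h (x + vf x) - h x) atTop (𝓝 0) := by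
      rw [Filter.tendsto_iff_seq_tendsto]
      intro u hu
      exact lcf_seq_aux h hmeas Hh v u (fun n => vf (u n)) hu (hvf.comp hu)
    have : Tendsto (fun x => Real.exp (h (x + vf x) - h x)) atTop (𝓝 (Real.exp 0)) :=
      (Real.continuous_exp.tendsto 0).comp key
    rw [Real.exp_zero] at this
    refine this.congr fun x => ?_
    rw [Real.exp_sub, Real.exp_log (hg_pos _), Real.exp_log (hg_pos _)]
  · intro H v
    exact H v (fun _ => v) tendsto_const_nhds
end

section
/- If ψ ∈ 𝒦 (i.e. ψ ≥ 1 is non-decreasing, ψ(x)=o(x), satisfies condition (A) with ∫₀^∞ a(u)du = ∞) and g is a ψ-l.c.f., then the convergence g(x + vψ(x))/g(x) → 1 is uniform in v on any compact interval [v₁, v₂]. -/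
open Filter Real MeasureTheory
open scoped Topology

/-- Key step: uniform smallness of the log-increments. -/
lemma psi_lcf_uniform_log (ψ a g : ℝ → ℝ)
    (hψ_one : ∀ x, 1 ≤ ψ x) (hψ_mono : Monotone ψ)
    (hψ_small : Tendsto (fun x => ψ x / x) atTop (𝓝 0))
    (ha_pos : ∀ v : ℝ, 0 < v → 0 < a v)
    (hA : ∀ v : ℝ, 0 < v → ∀ᶠ x in atTop, a v * ψ x ≤ ψ (x - v * ψ x))
    (hg_pos : ∀ x, 0 < g x) (hg_meas : Measurable g)
    (hg_lcf : ∀ v : ℝ, Tendsto (fun x => g (x + v * ψ x) / g x) atTop (𝓝 1))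
    (v₁ v₂ : ℝ) (h12 : v₁ < v₂) (δ : ℝ) (hδ : 0 < δ) :
    ∃ X : ℝ, ∀ x ≥ X, ∀ v ∈ Set.Icc v₁ v₂,
      |Real.log (g (x + v * ψ x)) - Real.log (g x)| < δ := by
  have hψ_pos : ∀ x, 0 < ψ x := fun x => lt_of_lt_of_le one_pos (hψ_one x)
  set H : ℝ → ℝ := fun y => Real.log (g y) with hH
  have hH_meas : Measurable H := (Real.measurable_log).comp hg_meas
  -- pointwise convergence in log form
  have hpt : ∀ w : ℝ, Tendsto (fun y => H (y + w * ψ y) - H y) atTop (𝓝 0) := by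
    intro w
    have h1 := (hg_lcf w).log one_ne_zero
    rw [Real.log_one] at h1
    refine h1.congr (fun y => ?_)
    rw [Real.log_div (ne_of_gt (hg_pos _)) (ne_of_gt (hg_pos _))]
  set V : ℝ := 1 + |v₁| + |v₂| with hV
  have hV_pos : 0 < V := by positivity
  obtain ⟨X₀, hX₀⟩ := eventually_atTop.mp (hA V hV_pos)
  set c : ℝ := a V with hc
  have hc_pos : 0 < c := ha_pos V hV_pos
  set C : ℝ := max c⁻¹ 1 with hCdef
  have hC_pos : 0 < C := lt_of_lt_of_le one_pos (le_max_right _ _)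
  by_contra hcon
  push_neg at hcon
  choose x hx v hv hbad using fun n : ℕ => hcon n
  have hx_tendsto : Tendsto x atTop atTop :=
    tendsto_atTop_mono hx tendsto_natCast_atTop_atTop
  have hvabs : ∀ n, |v n| ≤ V := by
    intro n
    obtain ⟨h1, h2⟩ := hv n
    rw [abs_le]
    have h01 := abs_nonneg v₁
    have h02 := abs_nonneg v₂
    constructor
    · have := neg_abs_le v₁; simp only [hV]; linarith
    · have := le_abs_self v₂; simp only [hV]; linarith
  set z : ℕ → ℝ := fun n => x n + v n * ψ (x n) with hz
  -- eventually V ψ y ≤ y / 2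
  have hev : ∀ᶠ y in atTop, V * ψ y ≤ y / 2 := by
    have h1 : ∀ᶠ y in atTop, ψ y / y < 1 / (2 * V) :=
      hψ_small.eventually_lt_const (by positivity)
    filter_upwards [h1, eventually_ge_atTop (1 : ℝ)] with y hy hy1
    have hy0 : (0 : ℝ) < y := lt_of_lt_of_le one_pos hy1
    rw [div_lt_div_iff₀ hy0 (by positivity)] at hy
    nlinarith [hψ_pos y]
  have hzx : ∀ᶠ n in atTop, V * ψ (x n) ≤ x n / 2 := hx_tendsto.eventually hev
  have hz_ge : ∀ᶠ n in atTop, x n / 2 ≤ z n := by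
    filter_upwards [hzx] with n hn
    have h1 : -(V * ψ (x n)) ≤ v n * ψ (x n) := by
      have := hvabs n
      have h2 : -V ≤ v n := by rw [abs_le] at this; exact this.1
      have := hψ_pos (x n)
      nlinarith
    simp only [hz]
    nlinarith [hψ_pos (x n)]
  have hz_tendsto : Tendsto z atTop atTop := by
    refine tendsto_atTop_mono' atTop hz_ge ?_
    exact Tendsto.atTop_div_const two_pos hx_tendsto
  -- ratio ρ control (for large n)
  set ρ : ℕ → ℝ := fun n => ψ (x n) / ψ (z n) with hρ
  have hρ_pos : ∀ n, 0 < ρ n := fun n => div_pos (hψ_pos _) (hψ_pos _)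
  have hgood : ∀ᶠ n in atTop, c ≤ ρ n ∧ ρ n ≤ C := by
    have hxX : ∀ᶠ n in atTop, X₀ ≤ x n := hx_tendsto.eventually (eventually_ge_atTop X₀)
    have hzX : ∀ᶠ n in atTop, X₀ ≤ z n := hz_tendsto.eventually (eventually_ge_atTop X₀)
    filter_upwards [hxX, hzX] with n hxn hzn
    have hψx := hψ_pos (x n)
    have hψz := hψ_pos (z n)
    constructor
    ·
      have hkey : z n - V * ψ (z n) ≤ x n := by
        rcases le_or_gt (v n) 0 with hv0 | hv0
        · have : z n ≤ x n := by
            simp only [hz]; nlinarith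
          nlinarith
        · have hxz : x n ≤ z n := by simp only [hz]; nlinarith
          have hψle : ψ (x n) ≤ ψ (z n) := hψ_mono hxz
          have : v n ≤ V := (abs_le.mp (hvabs n)).2
          have : v n * ψ (x n) ≤ V * ψ (z n) := by nlinarith
          simp only [hz]; linarith
      have h1 : c * ψ (z n) ≤ ψ (z n - V * ψ (z n)) := hX₀ (z n) hzn
      have h2 : ψ (z n - V * ψ (z n)) ≤ ψ (x n) := hψ_mono hkey
      rw [le_div_iff₀ hψz]
      linarith
    · -- ρ n ≤ C : ψ (z n) ≥ c ψ (x n)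
      have hkey : x n - V * ψ (x n) ≤ z n := by
        have h2 : -V ≤ v n := (abs_le.mp (hvabs n)).1
        simp only [hz]; nlinarith
      have h1 : c * ψ (x n) ≤ ψ (x n - V * ψ (x n)) := hX₀ (x n) hxn
      have h2 : ψ (x n - V * ψ (x n)) ≤ ψ (z n) := hψ_mono hkey
      have h3 : ψ (x n) ≤ c⁻¹ * ψ (z n) := by
        have h4 := mul_le_mul_of_nonneg_left (le_trans h1 h2) (inv_pos.mpr hc_pos).le
        rwa [← mul_assoc, inv_mul_cancel₀ hc_pos.ne', one_mul] at h4
      rw [div_le_iff₀ hψz]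
      calc ψ (x n) ≤ c⁻¹ * ψ (z n) := h3
        _ ≤ C * ψ (z n) := mul_le_mul_of_nonneg_right (le_max_left _ _) hψz.le
  -- the bad sets
  set E : ℕ → Set ℝ := fun n =>
    Set.Icc v₁ (v₂ + 2) ∩ {t | δ / 2 ≤ |H (x n + t * ψ (x n)) - H (x n)|} with hE
  set F : ℕ → Set ℝ := fun n =>
    Set.Icc 0 (2 * C) ∩ {w | δ / 2 ≤ |H (z n + w * ψ (z n)) - H (z n)|} with hF
  have hE_meas : ∀ n, MeasurableSet (E n) := by
    intro n
    refine measurableSet_Icc.inter ?_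
    have hm : Measurable fun t : ℝ => |H (x n + t * ψ (x n)) - H (x n)| :=
      ((hH_meas.comp (measurable_const.add (measurable_id.mul_const _))).sub
        measurable_const).abs
    exact measurableSet_le measurable_const hm
  have hF_meas : ∀ n, MeasurableSet (F n) := by
    intro n
    refine measurableSet_Icc.inter ?_
    have hm : Measurable fun w : ℝ => |H (z n + w * ψ (z n)) - H (z n)| :=
      ((hH_meas.comp (measurable_const.add (measurable_id.mul_const _))).sub
        measurable_const).abs
    exact measurableSet_le measurable_const hm
  -- their measures go to 0
  have hE_vol : Tendsto (fun n => volume (E n)) atTop (𝓝 0) := by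
    have := tendsto_measure_of_tendsto_indicator (A := (∅ : Set ℝ)) (atTop : Filter ℕ)
      hE_meas (measurableSet_Icc (a := v₁) (b := v₂ + 2))
      (show volume (Set.Icc v₁ (v₂ + 2)) ≠ ⊤ from measure_Icc_lt_top.ne) (Eventually.of_forall fun n => Set.inter_subset_left)
      ?_
    · simpa using this
    · intro t
      simp only [Set.mem_empty_iff_false, iff_false]
      have h1 : Tendsto (fun n => H (x n + t * ψ (x n)) - H (x n)) atTop (𝓝 0) :=
        (hpt t).comp hx_tendsto
      have h2 : ∀ᶠ n in atTop, |H (x n + t * ψ (x n)) - H (x n)| < δ / 2 := by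
        have := h1.abs
        rw [abs_zero] at this
        exact this.eventually_lt_const (by positivity)
      filter_upwards [h2] with n hn
      intro hmem
      exact absurd hmem.2 (not_le.mpr hn)
  have hF_vol : Tendsto (fun n => volume (F n)) atTop (𝓝 0) := by
    have := tendsto_measure_of_tendsto_indicator (A := (∅ : Set ℝ)) (atTop : Filter ℕ)
      hF_meas (measurableSet_Icc (a := (0:ℝ)) (b := 2 * C))
      (show volume (Set.Icc (0:ℝ) (2 * C)) ≠ ⊤ from measure_Icc_lt_top.ne) (Eventually.of_forall fun n => Set.inter_subset_left)
      ?_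
    · simpa using this
    · intro w
      simp only [Set.mem_empty_iff_false, iff_false]
      have h1 : Tendsto (fun n => H (z n + w * ψ (z n)) - H (z n)) atTop (𝓝 0) :=
        (hpt w).comp hz_tendsto
      have h2 : ∀ᶠ n in atTop, |H (z n + w * ψ (z n)) - H (z n)| < δ / 2 := by
        have := h1.abs
        rw [abs_zero] at this
        exact this.eventually_lt_const (by positivity)
      filter_upwards [h2] with n hn
      intro hmem
      exact absurd hmem.2 (not_le.mpr hn)
  -- pick a good n
  have hEsmall : ∀ᶠ n in atTop, volume (E n) ≤ ENNReal.ofReal 1 := by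
    filter_upwards [hE_vol.eventually_lt_const (show (0 : ENNReal) < ENNReal.ofReal 1 by
      simp)] with n hn
    exact hn.le
  have hFsmall : ∀ᶠ n in atTop, volume (F n) ≤ ENNReal.ofReal (c / 2) := by
    filter_upwards [hF_vol.eventually_lt_const (show (0 : ENNReal) < ENNReal.ofReal (c / 2) by
      rw [ENNReal.ofReal_pos]; positivity)] with n hn
    exact hn.le
  obtain ⟨n, hρn, hEn, hFn⟩ := (hgood.and (hEsmall.and hFsmall)).exists
  obtain ⟨hρc, hρC⟩ := hρn
  have hρn_pos : 0 < ρ n := hρ_pos n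
  -- the preimage of F n under the affine map
  set T : ℝ → ℝ := fun s => (s - v n) * ρ n with hT
  have hT_pre : T ⁻¹' (F n) = (· + -(v n)) ⁻¹' ((· * ρ n) ⁻¹' (F n)) := by
    ext s
    simp [hT, sub_eq_add_neg]
  have hT_vol : volume (T ⁻¹' (F n)) ≤ ENNReal.ofReal (1 / 2) := by
    rw [hT_pre, measure_preimage_add_right, Real.volume_preimage_mul_right hρn_pos.ne']
    have h1 : ENNReal.ofReal |(ρ n)⁻¹| ≤ ENNReal.ofReal c⁻¹ := by
      apply ENNReal.ofReal_le_ofReal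
      rw [abs_of_pos (inv_pos.mpr hρn_pos)]
      exact inv_anti₀ hc_pos hρc
    calc ENNReal.ofReal |(ρ n)⁻¹| * volume (F n)
        ≤ ENNReal.ofReal c⁻¹ * ENNReal.ofReal (c / 2) := mul_le_mul' h1 hFn
      _ = ENNReal.ofReal (c⁻¹ * (c / 2)) := (ENNReal.ofReal_mul (by positivity)).symm
      _ = ENNReal.ofReal (1 / 2) := by
          congr 1
          field_simp
  -- the interval is not covered
  have hnot : ¬ Set.Icc (v n) (v n + 2) ⊆ E n ∪ T ⁻¹' (F n) := by
    intro hsub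
    have h1 : (ENNReal.ofReal 2) ≤ volume (E n ∪ T ⁻¹' (F n)) := by
      have := measure_mono (μ := volume) hsub
      rwa [Real.volume_Icc, add_sub_cancel_left] at this
    have h2 : volume (E n ∪ T ⁻¹' (F n)) ≤ ENNReal.ofReal 1 + ENNReal.ofReal (1 / 2) :=
      le_trans (measure_union_le _ _) (add_le_add hEn hT_vol)
    rw [← ENNReal.ofReal_add (by norm_num) (by norm_num)] at h2
    have h3 := le_trans h1 h2
    rw [ENNReal.ofReal_le_ofReal_iff (by norm_num)] at h3
    norm_num at h3
  obtain ⟨s, hsIcc, hsnot⟩ := Set.not_subset.mp hnot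
  rw [Set.mem_union] at hsnot
  push_neg at hsnot
  obtain ⟨hsE, hsF⟩ := hsnot
  obtain ⟨hs1, hs2⟩ := hsIcc
  obtain ⟨hv1, hv2⟩ := hv n
  -- s is in the big interval
  have hsIcc' : s ∈ Set.Icc v₁ (v₂ + 2) := ⟨le_trans hv1 hs1, by linarith⟩
  have hE_small : |H (x n + s * ψ (x n)) - H (x n)| < δ / 2 := by
    by_contra hle
    exact hsE (Set.mem_inter hsIcc' (not_lt.mp hle))
  -- the shifted point
  have hwIcc : T s ∈ Set.Icc (0 : ℝ) (2 * C) := by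
    constructor
    · apply mul_nonneg (by linarith) hρn_pos.le
    · calc (s - v n) * ρ n ≤ 2 * ρ n := by nlinarith
        _ ≤ 2 * C := by nlinarith
  have hF_small : |H (z n + T s * ψ (z n)) - H (z n)| < δ / 2 := by
    by_contra hle
    exact hsF (Set.mem_inter hwIcc (not_lt.mp hle))
  have hψz_ne : ψ (z n) ≠ 0 := (hψ_pos (z n)).ne'
  have heq : z n + T s * ψ (z n) = x n + s * ψ (x n) := by
    simp only [hT, hρ, hz]
    field_simp [show ψ (x n + v n * ψ (x n)) ≠ 0 from hψz_ne]
    ring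
  rw [heq] at hF_small
  have hfin : |H (z n) - H (x n)| < δ := by
    calc |H (z n) - H (x n)|
        ≤ |H (z n) - H (x n + s * ψ (x n))| + |H (x n + s * ψ (x n)) - H (x n)| :=
          abs_sub_le _ _ _
      _ < δ / 2 + δ / 2 := by
          rw [abs_sub_comm]
          exact add_lt_add hF_small hE_small
      _ = δ := by ring
  simp only [hH, hz] at hfin
  exact absurd (hbad n) (not_le.mpr hfin)

/-- Uniform convergence theorem for `ψ`-l.c.f.'s with `ψ` in class `𝒦`. -/
theorem psi_lcf_uniform_convergence (ψ a g : ℝ → ℝ)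
    (hψ_one : ∀ x, 1 ≤ ψ x) (hψ_mono : Monotone ψ)
    (hψ_small : Tendsto (fun x => ψ x / x) atTop (𝓝 0))
    (ha_anti : AntitoneOn a (Set.Ioi 0))
    (ha_pos : ∀ v : ℝ, 0 < v → 0 < a v)
    (hA : ∀ v : ℝ, 0 < v → ∀ᶠ x in atTop, a v * ψ x ≤ ψ (x - v * ψ x))
    (ha_int : Tendsto (fun r => ∫ u in (0:ℝ)..r, a u) atTop atTop)
    (hg_pos : ∀ x, 0 < g x) (hg_meas : Measurable g)
    (hg_lcf : ∀ v : ℝ, Tendsto (fun x => g (x + v * ψ x) / g x) atTop (𝓝 1)) :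
    ∀ v₁ v₂ : ℝ, v₁ < v₂ → ∀ ε > 0, ∃ X : ℝ, ∀ x ≥ X,
      ∀ v ∈ Set.Icc v₁ v₂, |g (x + v * ψ x) / g x - 1| < ε := by
  intro v₁ v₂ h12 ε hε
  set ε' : ℝ := min ε (1/2) with hε'def
  have hε'_pos : 0 < ε' := lt_min hε (by norm_num)
  have hε'_le : ε' ≤ ε := min_le_left _ _
  set δ : ℝ := Real.log (1 + ε') with hδdef
  have hδ_pos : 0 < δ := Real.log_pos (by linarith)
  obtain ⟨X, hX⟩ := psi_lcf_uniform_log ψ a g hψ_one hψ_mono hψ_small ha_pos hA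
    hg_pos hg_meas hg_lcf v₁ v₂ h12 δ hδ_pos
  refine ⟨X, fun x hx v hv => ?_⟩
  have h := hX x hx v hv
  set r : ℝ := g (x + v * ψ x) / g x with hr
  have hr_pos : 0 < r := div_pos (hg_pos _) (hg_pos _)
  have hlog : |Real.log r| < δ := by
    rw [hr, Real.log_div (hg_pos _).ne' (hg_pos _).ne']
    exact h
  rw [abs_lt] at hlog
  have h1ε : (0:ℝ) < 1 + ε' := by linarith
  have hub : r < 1 + ε' := by
    have := hlog.2
    rw [hδdef] at this
    calc r = Real.exp (Real.log r) := (Real.exp_log hr_pos).symm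
      _ < Real.exp (Real.log (1 + ε')) := Real.exp_lt_exp.mpr this
      _ = 1 + ε' := Real.exp_log h1ε
  have hlb : (1 + ε')⁻¹ < r := by
    have h2 := hlog.1
    rw [hδdef, ← Real.log_inv] at h2
    calc (1 + ε')⁻¹ = Real.exp (Real.log (1 + ε')⁻¹) :=
          (Real.exp_log (by positivity)).symm
      _ < Real.exp (Real.log r) := Real.exp_lt_exp.mpr h2
      _ = r := Real.exp_log hr_pos
  rw [abs_lt]
  constructor
  · -- 1 - r < ε : r > (1+ε')⁻¹ ≥ 1 - ε'
    have hkey : (1:ℝ) - ε' ≤ (1 + ε')⁻¹ := by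
      rw [inv_eq_one_div, le_div_iff₀ h1ε]
      nlinarith [sq_nonneg ε']
    linarith
  · linarith
end

section
/- Let ψ ∈ 𝒦 and γ(x) = ∫₁^x dt/ψ(t). For each fixed v > 0 and all sufficiently large x, there exists r = r(x,v) bounded in x such that γ(x + rψ(x)) = γ(x) + v. -/
open Filter Real MeasureTheory
open scoped Topology

/-- Lower Riemann sum bound: for antitone `a` on `(0,∞)`,
`∫₁^{n+1} a ≤ ∑_{i=1}^n a(i)`. -/
lemma sum_a_ge_integral (a : ℝ → ℝ) (ha_anti : AntitoneOn a (Set.Ioi 0)) :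
    ∀ n : ℕ, (∫ u in (1:ℝ)..((n:ℝ)+1), a u) ≤ ∑ i ∈ Finset.Icc 1 n, a i := by
  have hII : ∀ p q : ℝ, 1 ≤ p → IntervalIntegrable a volume p q → True := fun _ _ _ _ => trivial
  intro n
  induction n with
  | zero => simp
  | succ k ih =>
    have hint1 : IntervalIntegrable a volume 1 ((k:ℝ)+1) := by
      apply AntitoneOn.intervalIntegrable
      apply ha_anti.mono
      intro t ht
      rcases Set.mem_uIcc.mp ht with h | h
      · exact lt_of_lt_of_le one_pos h.1
      · have : (0:ℝ) < (k:ℝ)+1 := by positivity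
        exact lt_of_lt_of_le this h.1
    have hint2 : IntervalIntegrable a volume ((k:ℝ)+1) ((k:ℝ)+1+1) := by
      apply AntitoneOn.intervalIntegrable
      apply ha_anti.mono
      intro t ht
      rcases Set.mem_uIcc.mp ht with h | h
      · exact lt_of_lt_of_le (by positivity) h.1
      · exact lt_of_lt_of_le (by positivity) h.1
    have hsplit : (∫ u in (1:ℝ)..(((k:ℕ)+1:ℕ):ℝ)+1, a u)
        = (∫ u in (1:ℝ)..((k:ℝ)+1), a u) + ∫ u in ((k:ℝ)+1)..((k:ℝ)+1+1), a u := by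
      rw [intervalIntegral.integral_add_adjacent_intervals hint1 hint2]
      norm_num
    have hpiece : (∫ u in ((k:ℝ)+1)..((k:ℝ)+1+1), a u) ≤ a ((k:ℕ)+1:ℕ) := by
      have : (∫ u in ((k:ℝ)+1)..((k:ℝ)+1+1), a u)
          ≤ ∫ _u in ((k:ℝ)+1)..((k:ℝ)+1+1), a ((k:ℝ)+1) := by
        apply intervalIntegral.integral_mono_on (by linarith) hint2
          intervalIntegrable_const
        intro u hu
        exact ha_anti (by simp; positivity) (lt_of_lt_of_le (by positivity) hu.1) hu.1
      simpa using this
    have hsum : ∑ i ∈ Finset.Icc 1 (k+1), a i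
        = (∑ i ∈ Finset.Icc 1 k, a i) + a ((k:ℕ)+1:ℕ) := by
      rw [← Finset.sum_Icc_succ_top (by omega : 1 ≤ k+1)]
    rw [hsplit, hsum]
    exact add_le_add ih hpiece

/-- From divergence of `∫₀^r a` get divergence of `∫₁^r a`. -/
lemma tendsto_integral_one (a : ℝ → ℝ) (ha_anti : AntitoneOn a (Set.Ioi 0))
    (ha_int : Tendsto (fun r => ∫ u in (0:ℝ)..r, a u) atTop atTop) :
    Tendsto (fun r => ∫ u in (1:ℝ)..r, a u) atTop atTop := by
  -- integrability on (0,1]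
  have h01 : IntegrableOn a (Set.Ioc 0 1) := by
    by_contra h
    have hzero : ∀ r : ℝ, 1 ≤ r → (∫ u in (0:ℝ)..r, a u) = 0 := by
      intro r hr
      rw [intervalIntegral.integral_of_le (by linarith)]
      apply integral_undef
      intro hi
      exact h (MeasureTheory.IntegrableOn.mono_set hi (Set.Ioc_subset_Ioc_right hr))
    have := (ha_int.eventually_ge_atTop 1).and (eventually_ge_atTop (1:ℝ))
    obtain ⟨r, hr1, hr2⟩ := this.exists
    rw [hzero r hr2] at hr1
    linarith
  have hII1 : IntervalIntegrable a volume 0 1 :=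
    (intervalIntegrable_iff_integrableOn_Ioc_of_le zero_le_one).mpr h01
  have hIIr : ∀ r : ℝ, 1 ≤ r → IntervalIntegrable a volume 1 r := by
    intro r hr
    apply AntitoneOn.intervalIntegrable
    apply ha_anti.mono
    intro t ht
    rcases Set.mem_uIcc.mp ht with h' | h'
    · exact lt_of_lt_of_le one_pos h'.1
    · exact lt_of_lt_of_le (by linarith) h'.1
  have heq : ∀ᶠ r in atTop, (∫ u in (0:ℝ)..r, a u) - (∫ u in (0:ℝ)..1, a u)
      = ∫ u in (1:ℝ)..r, a u := by
    filter_upwards [eventually_ge_atTop (1:ℝ)] with r hr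
    rw [← intervalIntegral.integral_add_adjacent_intervals hII1 (hIIr r hr)]
    ring
  have : Tendsto (fun r => (∫ u in (0:ℝ)..r, a u) - (∫ u in (0:ℝ)..1, a u)) atTop atTop :=
    tendsto_atTop_add_const_right atTop _ ha_int
  exact this.congr' heq

/-- For `ψ ∈ 𝒦`, given `v > 0` one can solve `γ(x + rψ(x)) = γ(x) + v` with `r`
bounded in `x`, where `γ(x) = ∫₁^x dt/ψ(t)`. -/
theorem gamma_shift_solvable (ψ a : ℝ → ℝ)
    (hψ_one : ∀ x, 1 ≤ ψ x) (hψ_mono : Monotone ψ)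
    (hψ_small : Tendsto (fun x => ψ x / x) atTop (𝓝 0))
    (ha_anti : AntitoneOn a (Set.Ioi 0))
    (ha_pos : ∀ v : ℝ, 0 < v → 0 < a v)
    (hA : ∀ v : ℝ, 0 < v → ∀ᶠ x in atTop, a v * ψ x ≤ ψ (x - v * ψ x))
    (ha_int : Tendsto (fun r => ∫ u in (0:ℝ)..r, a u) atTop atTop) :
    ∀ v : ℝ, 0 < v → ∃ M : ℝ, 0 < M ∧ ∀ᶠ x in atTop, ∃ r : ℝ,
      0 ≤ r ∧ r ≤ M ∧
      (∫ t in (1:ℝ)..(x + r * ψ x), 1 / ψ t) = (∫ t in (1:ℝ)..x, 1 / ψ t) + v := by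
  intro v hv
  have hψ_pos : ∀ t, 0 < ψ t := fun t => lt_of_lt_of_le one_pos (hψ_one t)
  -- choose n with  v ≤ ∑_{i=1}^n a(i)
  obtain ⟨R, hR⟩ := eventually_atTop.mp
    ((tendsto_integral_one a ha_anti ha_int).eventually_ge_atTop v)
  set n : ℕ := max 1 ⌈R⌉₊ with hn
  have hn1 : 1 ≤ n := le_max_left _ _
  have hnR : R ≤ (n:ℝ) + 1 := by
    have : R ≤ (⌈R⌉₊ : ℝ) := Nat.le_ceil R
    have h2 : (⌈R⌉₊:ℝ) ≤ (n:ℝ) := by exact_mod_cast le_max_right 1 ⌈R⌉₊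
    linarith
  have hsum : v ≤ ∑ i ∈ Finset.Icc 1 n, a i :=
    le_trans (hR _ hnR) (sum_a_ge_integral a ha_anti n)
  -- thresholds from condition (A)
  have hAev : ∀ᶠ z in atTop, ∀ i ∈ Finset.Icc 1 n, a i * ψ z ≤ ψ (z - i * ψ z) := by
    rw [eventually_all_finset]
    intro i hi
    have : (0:ℝ) < i := by
      have := (Finset.mem_Icc.mp hi).1; exact_mod_cast Nat.lt_of_lt_of_le Nat.zero_lt_one this
    exact hA i this
  obtain ⟨X, hX⟩ := eventually_atTop.mp hAev
  refine ⟨(n:ℝ), by exact_mod_cast Nat.lt_of_lt_of_le Nat.zero_lt_one hn1, ?_⟩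
  -- integrability of 1/ψ
  have h1ψ_anti : Antitone (fun t => 1 / ψ t) := by
    intro s t hst
    exact one_div_le_one_div_of_le (hψ_pos s) (hψ_mono hst)
  have hI : ∀ p q : ℝ, IntervalIntegrable (fun t => 1 / ψ t) volume p q :=
    fun p q => h1ψ_anti.intervalIntegrable
  set γ : ℝ → ℝ := fun y => ∫ t in (1:ℝ)..y, 1 / ψ t with hγ
  have hγdiff : ∀ p q : ℝ, γ q - γ p = ∫ t in p..q, 1 / ψ t := fun p q =>
    intervalIntegral.integral_interval_sub_left (hI 1 q) (hI 1 p)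
  -- γ is Lipschitz
  have hlip : LipschitzWith 1 γ := by
    apply LipschitzWith.of_dist_le_mul
    intro p q
    rw [Real.dist_eq, Real.dist_eq, NNReal.coe_one, one_mul, hγdiff q p]
    have hb : ∀ t ∈ Set.uIoc q p, ‖1 / ψ t‖ ≤ 1 := by
      intro t _
      rw [Real.norm_eq_abs, abs_of_pos (one_div_pos.mpr (hψ_pos t)), div_le_one (hψ_pos t)]
      exact hψ_one t
    have hnn := intervalIntegral.norm_integral_le_of_norm_le_const hb
    simpa [Real.norm_eq_abs] using hnn
  filter_upwards [eventually_ge_atTop X] with x hx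
  -- key lower bound by induction
  have key : ∀ k : ℕ, k ≤ n →
      (∑ i ∈ Finset.Icc 1 k, a i) ≤ ∫ t in x..(x + (k:ℝ) * ψ x), 1 / ψ t := by
    intro k
    induction k with
    | zero => intro _; simp
    | succ m ih =>
      intro hkn
      have ihm := ih (le_trans (Nat.le_succ m) hkn)
      set p := x + (m:ℝ) * ψ x with hp
      set z := x + ((m:ℝ)+1) * ψ x with hz
      have hψx : 0 < ψ x := hψ_pos x
      have hpz : p ≤ z := by rw [hp, hz]; nlinarith
      have hxp : x ≤ p := by
        have h0 : 0 ≤ (m:ℝ) * ψ x := mul_nonneg (Nat.cast_nonneg m) hψx.le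
        rw [hp]; linarith
      have hsplit : (∫ t in x..(x + (((m:ℕ)+1:ℕ):ℝ) * ψ x), 1 / ψ t)
          = (∫ t in x..p, 1 / ψ t) + ∫ t in p..z, 1 / ψ t := by
        rw [intervalIntegral.integral_add_adjacent_intervals (hI x p) (hI p z)]
        rw [hz]; push_cast; ring_nf
      have hmem : ((m:ℕ)+1) ∈ Finset.Icc 1 n := Finset.mem_Icc.mpr ⟨by omega, hkn⟩
      have hzX : X ≤ z := le_trans hx (le_trans hxp hpz)
      have hAz := hX z hzX _ hmem
      push_cast at hAz
      -- ψ(z - (m+1)ψ z) ≤ ψ x  since  z - (m+1)ψz ≤ x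
      have hψxz : ψ x ≤ ψ z := hψ_mono (le_trans hxp hpz)
      have hle : z - ((m:ℝ)+1) * ψ z ≤ x := by
        rw [hz]; nlinarith
      have hkey : a ((m:ℝ)+1) * ψ z ≤ ψ x := le_trans hAz (hψ_mono hle)
      have hadiv : a ((m:ℝ)+1) ≤ ψ x * (1 / ψ z) := by
        rw [mul_one_div, le_div_iff₀ (hψ_pos z)]
        exact hkey
      have hpiece : a ((m:ℝ)+1) ≤ ∫ t in p..z, 1 / ψ t := by
        have hconst : (∫ _t in p..z, 1 / ψ z) = ψ x * (1 / ψ z) := by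
          rw [intervalIntegral.integral_const, smul_eq_mul]
          congr 1
          rw [hz, hp]; ring
        have hmono : (∫ _t in p..z, 1 / ψ z) ≤ ∫ t in p..z, 1 / ψ t := by
          apply intervalIntegral.integral_mono_on hpz intervalIntegrable_const (hI p z)
          intro t ht
          exact one_div_le_one_div_of_le (hψ_pos t) (hψ_mono ht.2)
        calc a ((m:ℝ)+1) ≤ ψ x * (1 / ψ z) := hadiv
          _ = ∫ _t in p..z, 1 / ψ z := hconst.symm
          _ ≤ _ := hmono
      have hsum' : ∑ i ∈ Finset.Icc 1 (m+1), a i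
          = (∑ i ∈ Finset.Icc 1 m, a i) + a ((m:ℕ)+1:ℕ) := by
        rw [← Finset.sum_Icc_succ_top (by omega : 1 ≤ m+1)]
      rw [hsplit, hsum']
      apply add_le_add ihm
      exact_mod_cast hpiece
  have hlow : γ x + v ≤ γ (x + (n:ℝ) * ψ x) := by
    have := le_trans hsum (key n le_rfl)
    have hd := hγdiff x (x + (n:ℝ) * ψ x)
    linarith
  -- IVT
  have hcont : ContinuousOn (fun r => γ (x + r * ψ x)) (Set.Icc 0 (n:ℝ)) :=
    (hlip.continuous.comp (continuous_const.add (continuous_id.mul continuous_const))).continuousOn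
  have h0 : (fun r => γ (x + r * ψ x)) 0 = γ x := by norm_num
  have hmemIcc : γ x + v ∈ Set.Icc ((fun r => γ (x + r * ψ x)) 0)
      ((fun r => γ (x + r * ψ x)) (n:ℝ)) := by
    rw [h0]
    exact ⟨by linarith, hlow⟩
  obtain ⟨r, hr, hreq⟩ := intermediate_value_Icc (Nat.cast_nonneg n :  (0:ℝ) ≤ (n:ℝ)) hcont hmemIcc
  exact ⟨r, hr.1, hr.2, hreq⟩
end

section
/- If ψ ∈ 𝒦 and g is a ψ-l.c.f., then ln g(x) = o(γ(x)) as x → ∞, where γ(x) = ∫₁^x dt/ψ(t). -/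
open Filter Real Asymptotics MeasureTheory Set
open scoped Topology ENNReal

section PsiLcfAux

lemma psiLcf_uniform (ψ h : ℝ → ℝ)
    (hψ_one : ∀ x, 1 ≤ ψ x) (hψ_mono : Monotone ψ)
    (hh_meas : Measurable h)
    (hlim : ∀ v : ℝ, Tendsto (fun x => h (x + v * ψ x) - h x) atTop (𝓝 0))
    (a₁ : ℝ) (ha₁ : 0 < a₁)
    (hA1 : ∀ᶠ x in atTop, a₁ * ψ x ≤ ψ (x - ψ x))
    {ε : ℝ} (hε : 0 < ε) :
    ∀ᶠ x in atTop, ∀ w ∈ Icc (0:ℝ) 1, |h (x + w * ψ x) - h x| ≤ 2 * ε := by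
  have hψ_pos : ∀ x, (0:ℝ) < ψ x := fun x => lt_of_lt_of_le one_pos (hψ_one x)
  set K : Set ℝ := Icc (-1:ℝ) 1 with hK
  set B : ℝ → Set ℝ := fun x => {v : ℝ | ε < |h (x + v * ψ x) - h x|} with hB
  have hBmeas : ∀ x, MeasurableSet (B x) := by
    intro x
    have hm : Measurable fun v : ℝ => h (x + v * ψ x) - h x :=
      (hh_meas.comp (measurable_const.add (measurable_id.mul_const _))).sub measurable_const
    exact measurableSet_lt measurable_const hm.abs
  set m : ℝ → ℝ≥0∞ := fun x => volume (B x ∩ K) with hm_def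
  have hm_ne_top : ∀ x, m x ≠ ∞ := by
    intro x
    exact ne_top_of_le_ne_top (by simp [hK]) (measure_mono Set.inter_subset_right)
  -- measure of bad set tends to 0
  have hmlim : Tendsto (fun x => (m x).toReal) atTop (𝓝 0) := by
    have hDCT := MeasureTheory.tendsto_integral_filter_of_dominated_convergence
      (μ := volume.restrict K) (l := atTop)
      (F := fun x (v : ℝ) => (B x).indicator (fun _ => (1:ℝ)) v) (f := fun _ => (0:ℝ))
      (bound := fun _ => (1:ℝ))
      (Eventually.of_forall fun x =>
        ((measurable_const.indicator (hBmeas x)).aestronglyMeasurable))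
      (Eventually.of_forall fun x => ae_of_all _ fun v => by
        by_cases hv : v ∈ B x <;> simp [Set.indicator, hv])
      (by
        have : volume K ≠ ∞ := by simp [hK]
        exact (integrableOn_const this))
      (ae_of_all _ fun v => by
        have hev : ∀ᶠ x in atTop, (h (x + v * ψ x) - h x) ∈ Ioo (-ε) ε :=
          (hlim v).eventually (Ioo_mem_nhds (by linarith) hε)
        refine Tendsto.congr' ?_ tendsto_const_nhds
        filter_upwards [hev] with x hx
        have : v ∉ B x := by
          simp only [hB, Set.mem_setOf_eq, not_lt]
          exact le_of_lt (abs_lt.mpr ⟨hx.1, hx.2⟩)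
        simp [Set.indicator, this])
    have heq : (fun x => ∫ v, (B x).indicator (fun _ => (1:ℝ)) v ∂(volume.restrict K))
        = fun x => (m x).toReal := by
      funext x
      rw [MeasureTheory.integral_indicator_const (1:ℝ) (hBmeas x), smul_eq_mul, mul_one,
        Measure.real, Measure.restrict_apply (hBmeas x)]
    rw [heq] at hDCT
    simpa using hDCT
  set δ : ℝ := a₁ / (2 * (a₁ + 1)) with hδ_def
  have hδ : 0 < δ := by positivity
  have hδ1 : δ + δ / a₁ = 1/2 := by
    have h1 : a₁ ≠ 0 := ha₁.ne'
    have h2 : a₁ + 1 ≠ 0 := by positivity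
    rw [hδ_def]
    field_simp
  obtain ⟨X₁, hX₁⟩ := eventually_atTop.mp (hmlim.eventually (Iio_mem_nhds hδ))
  obtain ⟨X₂, hX₂⟩ := eventually_atTop.mp hA1
  have hmδ : ∀ z ≥ X₁, m z ≤ ENNReal.ofReal δ := by
    intro z hz
    rw [ENNReal.le_ofReal_iff_toReal_le (hm_ne_top z) hδ.le]
    exact (hX₁ z hz).le
  filter_upwards [eventually_ge_atTop (max X₁ X₂)] with x hx w hw
  have hxX₁ : X₁ ≤ x := le_trans (le_max_left _ _) hx
  have hxX₂ : X₂ ≤ x := le_trans (le_max_right _ _) hx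
  set y : ℝ := x + w * ψ x with hy_def
  have hyx : x ≤ y := by nlinarith [hψ_pos x, hw.1]
  have hyz : y ≤ x + ψ x := by nlinarith [hψ_pos x, hw.2]
  -- ψ y ≤ ψ x / a₁
  have hkey : a₁ * ψ y ≤ ψ x := by
    have h1 : a₁ * ψ (x + ψ x) ≤ ψ (x + ψ x - ψ (x + ψ x)) :=
      hX₂ _ (le_trans hxX₂ (by nlinarith [hψ_pos x]))
    have h2 : x + ψ x - ψ (x + ψ x) ≤ x := by
      have := hψ_mono (le_add_of_nonneg_right (hψ_pos x).le : x ≤ x + ψ x)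
      linarith
    have h3 : ψ (x + ψ x - ψ (x + ψ x)) ≤ ψ x := hψ_mono h2
    have h4 : ψ y ≤ ψ (x + ψ x) := hψ_mono hyz
    nlinarith
  have hψyx : ψ x ≤ ψ y := hψ_mono hyx
  set c : ℝ := ψ x / ψ y with hc_def
  have hc_pos : 0 < c := div_pos (hψ_pos x) (hψ_pos y)
  have hc_le : c ≤ 1 := div_le_one_of_le₀ hψyx (hψ_pos y).le
  set T : Set ℝ := (fun v => c * (v - w)) ⁻¹' (B y ∩ K) with hT_def
  have hTvol : volume T ≤ ENNReal.ofReal (1/a₁) * ENNReal.ofReal δ := by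
    have hcomp : T = (fun v : ℝ => v + (-w)) ⁻¹' ((fun v : ℝ => c * v) ⁻¹' (B y ∩ K)) := by
      ext v; simp [hT_def, sub_eq_add_neg]
    rw [hcomp, measure_preimage_add_right, Real.volume_preimage_mul_left hc_pos.ne', ]
    have h1c : |c⁻¹| ≤ 1/a₁ := by
      rw [abs_of_pos (inv_pos.mpr hc_pos)]
      rw [hc_def, inv_div, div_le_div_iff₀ (hψ_pos x) ha₁]
      nlinarith
    exact mul_le_mul' (ENNReal.ofReal_le_ofReal h1c) (hmδ y (le_trans hxX₁ hyx))
  have hBadvol : volume ((B x ∩ K) ∪ T) < volume (Icc (0:ℝ) 1) := by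
    calc volume ((B x ∩ K) ∪ T) ≤ volume (B x ∩ K) + volume T := measure_union_le _ _
      _ ≤ ENNReal.ofReal δ + ENNReal.ofReal (1/a₁) * ENNReal.ofReal δ :=
          add_le_add (hmδ x hxX₁) hTvol
      _ = ENNReal.ofReal (δ + δ/a₁) := by
          rw [← ENNReal.ofReal_mul (by positivity), ← ENNReal.ofReal_add hδ.le (by positivity)]
          ring_nf
      _ < volume (Icc (0:ℝ) 1) := by
          rw [hδ1, Real.volume_Icc]
          norm_num
  obtain ⟨v, hv01, hvBad⟩ : ∃ v ∈ Icc (0:ℝ) 1, v ∉ (B x ∩ K) ∪ T := by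
    by_contra hcon
    push_neg at hcon
    exact absurd (measure_mono hcon) (not_le.mpr hBadvol)
  have hvK : v ∈ K := ⟨le_trans (by norm_num) hv01.1, hv01.2⟩
  have hvB : v ∉ B x := fun hmem => hvBad (Or.inl ⟨hmem, hvK⟩)
  have hvT : v ∉ T := fun hmem => hvBad (Or.inr hmem)
  set u : ℝ := c * (v - w) with hu_def
  have huK : u ∈ K := by
    constructor
    · nlinarith [hv01.1, hv01.2, hw.1, hw.2]
    · nlinarith [hv01.1, hv01.2, hw.1, hw.2]
  have huB : u ∉ B y := fun hmem => hvT ⟨hmem, huK⟩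
  have heq : y + u * ψ y = x + v * ψ x := by
    have hne : ψ (x + w * ψ x) ≠ 0 := (hψ_pos _).ne'
    rw [hu_def, hc_def, hy_def]
    field_simp
    ring
  have h1 : |h (x + v * ψ x) - h x| ≤ ε := not_lt.mp hvB
  have h2 : |h (y + u * ψ y) - h y| ≤ ε := not_lt.mp huB
  rw [heq] at h2
  calc |h y - h x| = |(h (x + v * ψ x) - h x) - (h (x + v * ψ x) - h y)| := by ring_nf
    _ ≤ |h (x + v * ψ x) - h x| + |h (x + v * ψ x) - h y| := abs_sub _ _
    _ ≤ ε + ε := add_le_add h1 h2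
    _ = 2 * ε := by ring


variable {ψ : ℝ → ℝ}

lemma psiInv_intervalIntegrable (hψ_one : ∀ x, 1 ≤ ψ x) (hψ_mono : Monotone ψ)
    (p q : ℝ) : IntervalIntegrable (fun t => 1 / ψ t) volume p q := by
  have hψ_pos : ∀ x, (0:ℝ) < ψ x := fun x => lt_of_lt_of_le one_pos (hψ_one x)
  rw [intervalIntegrable_iff]
  apply Measure.integrableOn_of_bounded (M := 1)
  · exact (measure_Ioc_lt_top).ne
  · exact (measurable_const.div hψ_mono.measurable).aestronglyMeasurable
  · refine ae_of_all _ fun t => ?_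
    rw [Real.norm_eq_abs, abs_of_pos (div_pos one_pos (hψ_pos t)), div_le_one (hψ_pos t)]
    exact hψ_one t

lemma gamma_add (hψ_one : ∀ x, 1 ≤ ψ x) (hψ_mono : Monotone ψ) (p q : ℝ) :
    (∫ t in (1:ℝ)..q, 1 / ψ t) =
      (∫ t in (1:ℝ)..p, 1 / ψ t) + ∫ t in p..q, 1 / ψ t :=
  (intervalIntegral.integral_add_adjacent_intervals
    (psiInv_intervalIntegrable hψ_one hψ_mono 1 p)
    (psiInv_intervalIntegrable hψ_one hψ_mono p q)).symm

lemma gamma_seg_lb (hψ_one : ∀ x, 1 ≤ ψ x) (hψ_mono : Monotone ψ) {p q : ℝ} (hpq : p ≤ q) :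
    (q - p) / ψ q ≤ ∫ t in p..q, 1 / ψ t := by
  have hψ_pos : ∀ x, (0:ℝ) < ψ x := fun x => lt_of_lt_of_le one_pos (hψ_one x)
  have hmono := intervalIntegral.integral_mono_on hpq
    (intervalIntegrable_const (c := 1 / ψ q))
    (psiInv_intervalIntegrable hψ_one hψ_mono p q)
    (fun t ht => one_div_le_one_div_of_le (hψ_pos t) (hψ_mono ht.2))
  rw [intervalIntegral.integral_const, smul_eq_mul] at hmono
  calc (q - p) / ψ q = (q - p) * (1 / ψ q) := by ring
    _ ≤ _ := hmono

lemma gamma_seg_nonneg (hψ_one : ∀ x, 1 ≤ ψ x) (hψ_mono : Monotone ψ) {p q : ℝ} (hpq : p ≤ q) :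
    0 ≤ ∫ t in p..q, 1 / ψ t := by
  have hψ_pos : ∀ x, (0:ℝ) < ψ x := fun x => lt_of_lt_of_le one_pos (hψ_one x)
  exact intervalIntegral.integral_nonneg hpq (fun t _ => le_of_lt (div_pos one_pos (hψ_pos t)))

lemma gamma_mono (hψ_one : ∀ x, 1 ≤ ψ x) (hψ_mono : Monotone ψ) {p q : ℝ} (hpq : p ≤ q) :
    (∫ t in (1:ℝ)..p, 1 / ψ t) ≤ ∫ t in (1:ℝ)..q, 1 / ψ t := by
  rw [gamma_add hψ_one hψ_mono p q]
  linarith [gamma_seg_nonneg hψ_one hψ_mono hpq]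

lemma gamma_tendsto (hψ_one : ∀ x, 1 ≤ ψ x) (hψ_mono : Monotone ψ)
    (hψ_small : Tendsto (fun x => ψ x / x) atTop (𝓝 0)) :
    Tendsto (fun x => ∫ t in (1:ℝ)..x, 1 / ψ t) atTop atTop := by
  have hψ_pos : ∀ x, (0:ℝ) < ψ x := fun x => lt_of_lt_of_le one_pos (hψ_one x)
  obtain ⟨T₀, hT₀⟩ := eventually_atTop.mp
    (hψ_small.eventually (Iio_mem_nhds (show (0:ℝ) < 1/2 by norm_num)))
  set T := max T₀ 1 with hT_def
  have hT1 : (1:ℝ) ≤ T := le_max_right _ _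
  have hTpos : (0:ℝ) < T := lt_of_lt_of_le one_pos hT1
  have hbound : ∀ᶠ x in atTop,
      (∫ t in (1:ℝ)..T, 1 / ψ t) + 2 * (Real.log x - Real.log T)
        ≤ ∫ t in (1:ℝ)..x, 1 / ψ t := by
    filter_upwards [eventually_ge_atTop T] with x hx
    rw [gamma_add hψ_one hψ_mono T x]
    have hcont : ContinuousOn (fun t : ℝ => 2 * (1 / t)) (Set.uIcc T x) := by
      apply ContinuousOn.mul continuousOn_const
      apply ContinuousOn.div continuousOn_const continuousOn_id
      intro t ht
      rw [Set.uIcc_of_le hx] at ht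
      exact (lt_of_lt_of_le hTpos ht.1).ne'
    have hint2 : IntervalIntegrable (fun t : ℝ => 2 * (1 / t)) volume T x :=
      hcont.intervalIntegrable
    have hmono := intervalIntegral.integral_mono_on hx hint2
      (psiInv_intervalIntegrable hψ_one hψ_mono T x)
      (fun t ht => by
        have ht1 : T ≤ t := ht.1
        have htpos : 0 < t := lt_of_lt_of_le hTpos ht1
        have hψt : ψ t / t < 1/2 := hT₀ t (le_trans (le_max_left _ _) ht1)
        have : ψ t < t / 2 := by
          rw [div_lt_iff₀ htpos] at hψt
          linarith
        calc 2 * (1 / t) = 1 / (t / 2) := by field_simp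
          _ ≤ 1 / ψ t := one_div_le_one_div_of_le (hψ_pos t) this.le)
    have hlog : (∫ t in T..x, 2 * (1 / t)) = 2 * (Real.log x - Real.log T) := by
      rw [intervalIntegral.integral_const_mul,
        integral_one_div (fun ht => by
          rw [Set.uIcc_of_le hx] at ht
          exact absurd ht.1 (by linarith)),
        Real.log_div (by linarith : x ≠ 0) hTpos.ne']
    rw [hlog] at hmono
    linarith
  apply tendsto_atTop_mono' _ hbound
  apply tendsto_atTop_add_const_left
  apply Tendsto.const_mul_atTop (by norm_num : (0:ℝ) < 2)
  exact tendsto_atTop_add_const_right _ _ Real.tendsto_log_atTop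

end PsiLcfAux

/-- If `ψ ∈ 𝒦` and `g` is a `ψ`-l.c.f., then `log g x = o(γ x)`
where `γ x = ∫₁^x dt/ψ t`. -/
theorem psi_lcf_log_littleO_gamma (ψ a g : ℝ → ℝ)
    (hψ_one : ∀ x, 1 ≤ ψ x) (hψ_mono : Monotone ψ)
    (hψ_small : Tendsto (fun x => ψ x / x) atTop (𝓝 0))
    (ha_anti : AntitoneOn a (Set.Ioi 0))
    (ha_pos : ∀ v : ℝ, 0 < v → 0 < a v)
    (hA : ∀ v : ℝ, 0 < v → ∀ᶠ x in atTop, a v * ψ x ≤ ψ (x - v * ψ x))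
    (ha_int : Tendsto (fun r => ∫ u in (0:ℝ)..r, a u) atTop atTop)
    (hg_pos : ∀ x, 0 < g x) (hg_meas : Measurable g)
    (hg_lcf : ∀ v : ℝ, Tendsto (fun x => g (x + v * ψ x) / g x) atTop (𝓝 1)) :
    (fun x => Real.log (g x)) =o[atTop] (fun x => ∫ t in (1:ℝ)..x, 1 / ψ t) := by
  classical
  have hψ_pos : ∀ x, (0:ℝ) < ψ x := fun x => lt_of_lt_of_le one_pos (hψ_one x)
  set h : ℝ → ℝ := fun x => Real.log (g x) with hh_def
  set γ : ℝ → ℝ := fun x => ∫ t in (1:ℝ)..x, 1 / ψ t with hγ_def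
  have hh_meas : Measurable h := Real.measurable_log.comp hg_meas
  have hlim : ∀ v : ℝ, Tendsto (fun x => h (x + v * ψ x) - h x) atTop (𝓝 0) := by
    intro v
    have heq : (fun x => h (x + v * ψ x) - h x)
        = fun x => Real.log (g (x + v * ψ x) / g x) := by
      funext x
      rw [Real.log_div (hg_pos _).ne' (hg_pos x).ne']
    rw [heq]
    have hcont : Tendsto Real.log (𝓝 1) (𝓝 0) := by
      have := (Real.continuousAt_log one_ne_zero).tendsto
      rwa [Real.log_one] at this
    exact hcont.comp (hg_lcf v)
  set a₁ : ℝ := a 1 with ha₁_def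
  have ha₁ : 0 < a₁ := ha_pos 1 one_pos
  have hA1 : ∀ᶠ x in atTop, a₁ * ψ x ≤ ψ (x - ψ x) := by
    have := hA 1 one_pos
    simpa using this
  rw [Asymptotics.isLittleO_iff]
  intro C hC
  set ε : ℝ := C * a₁ / 6 with hε_def
  have hε : 0 < ε := by positivity
  have hu := psiLcf_uniform ψ h hψ_one hψ_mono hh_meas hlim a₁ ha₁ hA1 hε
  obtain ⟨X, hX⟩ := eventually_atTop.mp (hu.and hA1)
  -- the chain
  set seq : ℕ → ℝ := fun n => Nat.rec X (fun _ s => s + ψ s) n with hseq_def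
  have hseqS : ∀ n, seq (n + 1) = seq n + ψ (seq n) := fun n => rfl
  have hseq_ge : ∀ n : ℕ, X + n ≤ seq n := by
    intro n
    induction n with
    | zero => simp [hseq_def]
    | succ k ih =>
      rw [hseqS]
      push_cast
      have := hψ_one (seq k)
      linarith
  have hseqX : ∀ n, X ≤ seq n := fun n => le_trans (le_add_of_nonneg_right n.cast_nonneg) (hseq_ge n)
  have hseq_mono : ∀ n, seq n ≤ seq (n + 1) := fun n => by
    rw [hseqS]; linarith [hψ_pos (seq n)]
  have hH : ∀ n : ℕ, |h (seq n)| ≤ |h X| + n * (2 * ε) := by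
    intro n
    induction n with
    | zero => simp [hseq_def]
    | succ k ih =>
      have hstep : |h (seq k + 1 * ψ (seq k)) - h (seq k)| ≤ 2 * ε :=
        (hX (seq k) (hseqX k)).1 1 ⟨zero_le_one, le_refl 1⟩
      rw [one_mul, ← hseqS k] at hstep
      have : |h (seq (k + 1))| ≤ |h (seq k)| + 2 * ε := by
        calc |h (seq (k + 1))| = |h (seq k) + (h (seq (k + 1)) - h (seq k))| := by
              congr 1; ring
          _ ≤ |h (seq k)| + |h (seq (k + 1)) - h (seq k)| := abs_add_le _ _
          _ ≤ |h (seq k)| + 2 * ε := by linarith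
      push_cast
      push_cast at ih
      linarith
  have hG : ∀ n : ℕ, γ X + n * a₁ ≤ γ (seq n) := by
    intro n
    induction n with
    | zero => simp [hseq_def]
    | succ k ih =>
      have h1 : a₁ * ψ (seq (k + 1)) ≤ ψ (seq (k + 1) - ψ (seq (k + 1))) :=
        (hX (seq (k + 1)) (hseqX (k + 1))).2
      have h2 : seq (k + 1) - ψ (seq (k + 1)) ≤ seq k := by
        have := hψ_mono (hseq_mono k)
        rw [hseqS]
        linarith
      have h3 : a₁ * ψ (seq (k + 1)) ≤ ψ (seq k) := le_trans h1 (hψ_mono h2)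
      have h4 : a₁ ≤ ψ (seq k) / ψ (seq (k + 1)) := by
        rw [le_div_iff₀ (hψ_pos _)]
        linarith
      have h5 : (seq (k + 1) - seq k) / ψ (seq (k + 1)) ≤ ∫ t in (seq k)..(seq (k + 1)), 1 / ψ t :=
        gamma_seg_lb hψ_one hψ_mono (hseq_mono k)
      have h6 : seq (k + 1) - seq k = ψ (seq k) := by rw [hseqS]; ring
      rw [h6] at h5
      have h7 : γ (seq (k + 1)) = γ (seq k) + ∫ t in (seq k)..(seq (k + 1)), 1 / ψ t :=
        gamma_add hψ_one hψ_mono _ _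
      push_cast
      push_cast at ih
      rw [h7]
      linarith
  -- bound for arbitrary x ≥ X
  have hmain : ∀ x, X ≤ x → |h x| ≤ (|h X| + 2 * ε) + (2 * ε / a₁) * (γ x - γ X) := by
    intro x hx
    have hex : ∃ N : ℕ, x < seq N := by
      refine ⟨⌊x - X⌋₊ + 1, ?_⟩
      have h1 := hseq_ge (⌊x - X⌋₊ + 1)
      have h2 := Nat.lt_floor_add_one (x - X)
      push_cast at h1 ⊢
      linarith
    set N := Nat.find hex with hN_def
    have hN : x < seq N := Nat.find_spec hex
    have hN0 : N ≠ 0 := by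
      intro h0
      rw [h0] at hN
      simp only [hseq_def] at hN
      exact absurd hN (not_lt.mpr hx)
    obtain ⟨n, hn⟩ := Nat.exists_eq_succ_of_ne_zero hN0
    have hsn : seq n ≤ x := not_lt.mp (Nat.find_min hex (by omega))
    set w : ℝ := (x - seq n) / ψ (seq n) with hw_def
    have hw : w ∈ Icc (0:ℝ) 1 := by
      constructor
      · exact div_nonneg (by linarith) (hψ_pos _).le
      · rw [div_le_one (hψ_pos _)]
        have := hN
        rw [hn, hseqS] at this
        linarith
    have hxw : seq n + w * ψ (seq n) = x := by
      rw [hw_def, div_mul_cancel₀ _ (hψ_pos _).ne']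
      ring
    have hstep : |h (seq n + w * ψ (seq n)) - h (seq n)| ≤ 2 * ε :=
      (hX (seq n) (hseqX n)).1 w hw
    rw [hxw] at hstep
    have hHx : |h x| ≤ |h X| + (n + 1) * (2 * ε) := by
      have h1 := hH n
      calc |h x| = |h (seq n) + (h x - h (seq n))| := by congr 1; ring
        _ ≤ |h (seq n)| + |h x - h (seq n)| := abs_add_le _ _
        _ ≤ (|h X| + n * (2 * ε)) + 2 * ε := by linarith
        _ = |h X| + (n + 1) * (2 * ε) := by ring
    have hGx : γ X + n * a₁ ≤ γ x :=
      le_trans (hG n) (gamma_mono hψ_one hψ_mono hsn)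
    have hn_le : (n : ℝ) ≤ (γ x - γ X) / a₁ := by
      rw [le_div_iff₀ ha₁]
      linarith
    calc |h x| ≤ |h X| + (n + 1) * (2 * ε) := hHx
      _ = |h X| + 2 * ε + (n : ℝ) * (2 * ε) := by ring
      _ ≤ |h X| + 2 * ε + ((γ x - γ X) / a₁) * (2 * ε) := by nlinarith
      _ = (|h X| + 2 * ε) + (2 * ε / a₁) * (γ x - γ X) := by ring
  -- conclude
  have h2εa : 2 * ε / a₁ = C / 3 := by
    rw [hε_def]
    field_simp
    ring
  set D : ℝ := |h X| + 2 * ε + (C / 3) * |γ X| with hD_def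
  have hD : 0 ≤ D := by positivity
  have hγb : ∀ᶠ x in atTop, max 0 (3 * D / C) ≤ γ x :=
    (gamma_tendsto hψ_one hψ_mono hψ_small).eventually_ge_atTop _
  filter_upwards [eventually_ge_atTop X, hγb] with x hx hγx
  have hγ0 : 0 ≤ γ x := le_trans (le_max_left _ _) hγx
  have hγD : 3 * D / C ≤ γ x := le_trans (le_max_right _ _) hγx
  have hb := hmain x hx
  rw [h2εa] at hb
  have hbb : |h x| ≤ D + (C / 3) * γ x := by
    have : (C / 3) * (γ x - γ X) ≤ (C / 3) * γ x + (C / 3) * |γ X| := by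
      have := neg_abs_le (γ X)
      nlinarith
    calc |h x| ≤ (|h X| + 2 * ε) + (C / 3) * (γ x - γ X) := hb
      _ ≤ (|h X| + 2 * ε) + ((C / 3) * γ x + (C / 3) * |γ X|) := by linarith
      _ = D + (C / 3) * γ x := by ring
  have hDγ : D ≤ (C / 3) * γ x := by
    have h1 : (C / 3) * (3 * D / C) ≤ (C / 3) * γ x :=
      mul_le_mul_of_nonneg_left hγD (by positivity)
    have h2 : (C / 3) * (3 * D / C) = D := by
      field_simp
    linarith
  rw [Real.norm_eq_abs, Real.norm_eq_abs, abs_of_nonneg hγ0]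
  calc |h x| ≤ D + (C / 3) * γ x := hbb
    _ ≤ (C / 3) * γ x + (C / 3) * γ x := by linarith
    _ ≤ C * γ x := by nlinarith
end
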